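/- arXiv:0809.0078 — 8 statements merged into one kernel-verified Lean document; each statement's English description precedes it below -/
import Mathlib

section
/- Let τ : S_n(ℂ) → S_m(ℂ) be any real-linear map between the spaces of Hermitian matrices and let 1 ≤ k ≤ m. Then the maximum over density matrices X ∈ S_n(ℂ) of ∑_{j=1}^k λ_j(τ(X)) equals the maximum, over unit vectors x ∈ ℂ^n and orthonormal systems y_1,…,y_k ∈ ℂ^m, of ∑_{j=1}^k tr(τ(x x^*) (y_j y_j^*)). -/
open scoped ComplexOrder
open Matrix Kronecker

/-- Frobenius norm of a complex matrix: `√(tr (X Xᴴ))`. -/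
noncomputable def frobNorm {n m : Type*} [Fintype n] [Fintype m]
    (X : Matrix n m ℂ) : ℝ :=
  Real.sqrt ((X * Xᴴ).trace.re)

/-- Operator norm `σ₁(τ) = ‖τ‖` of a map between spaces of Hermitian matrices,
with respect to the Frobenius norm. -/
noncomputable def opNorm {n m : Type*} [Fintype n] [Fintype m]
    (τ : Matrix n n ℂ → Matrix m m ℂ) : ℝ :=
  sSup {c : ℝ | ∃ X : Matrix n n ℂ, X.IsHermitian ∧ frobNorm X ≤ 1 ∧ c = frobNorm (τ X)}

/-- The second singular value of a map between spaces of Hermitian matrices, via the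
Courant–Fischer min-max characterization: the infimum over nonzero Hermitian `U` of the
norm of `τ` restricted to the orthogonal complement of `U`. -/
noncomputable def sigma2 {n m : Type*} [Fintype n] [Fintype m]
    (τ : Matrix n n ℂ → Matrix m m ℂ) : ℝ :=
  sInf {c : ℝ | ∃ U : Matrix n n ℂ, U.IsHermitian ∧ U ≠ 0 ∧
    c = sSup {d : ℝ | ∃ X : Matrix n n ℂ, X.IsHermitian ∧ frobNorm X ≤ 1 ∧
      (U * X).trace.re = 0 ∧ d = frobNorm (τ X)}}

/-- Largest eigenvalue `λ₁` of a Hermitian matrix (junk value `0` otherwise). -/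
noncomputable def lambdaMax {n : Type*} [Fintype n] [DecidableEq n]
    (Y : Matrix n n ℂ) : ℝ :=
  if hY : Y.IsHermitian then ⨆ i, hY.eigenvalues i else 0

/-- von Neumann entropy `H(Y) = -∑ λᵢ log λᵢ` of a Hermitian matrix
(junk value `0` otherwise); note `Real.log 0 = 0`. -/
noncomputable def entropy {n : Type*} [Fintype n] [DecidableEq n]
    (Y : Matrix n n ℂ) : ℝ :=
  if hY : Y.IsHermitian then -∑ i, hY.eigenvalues i * Real.log (hY.eigenvalues i) else 0

/-- Minimum output entropy of a channel: the infimum of `H(τ X)` over density matrices `X`. -/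
noncomputable def minEntropy {n m : Type*} [Fintype n] [DecidableEq n] [Fintype m] [DecidableEq m]
    (τ : Matrix n n ℂ → Matrix m m ℂ) : ℝ :=
  sInf {h : ℝ | ∃ X : Matrix n n ℂ, X.PosSemidef ∧ X.trace = 1 ∧ h = entropy (τ X)}

/-- Eigenvalues of a Hermitian matrix arranged in decreasing order:
`eigsDesc Y 0 = λ₁ ≥ eigsDesc Y 1 = λ₂ ≥ …` (junk value `0` if not Hermitian). -/
noncomputable def eigsDesc {n : ℕ} (Y : Matrix (Fin n) (Fin n) ℂ) : Fin n → ℝ :=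
  if hY : Y.IsHermitian then fun i => hY.eigenvalues (Tuple.sort hY.eigenvalues i.rev)
  else fun _ => 0

/-- The sum `λ₁ + ⋯ + λ_k` of the `k` largest eigenvalues of a Hermitian matrix. -/
noncomputable def sumTopEigs {n : ℕ} (k : ℕ) (Y : Matrix (Fin n) (Fin n) ℂ) : ℝ :=
  ∑ i : Fin n, if (i : ℕ) < k then eigsDesc Y i else 0


section Helpers

open scoped InnerProductSpace

lemma trace_mul_vecMulVec {m : Type*} [Fintype m] (Z : Matrix m m ℂ) (y : m → ℂ) :
    (Z * vecMulVec y (star y)).trace = star y ⬝ᵥ (Z *ᵥ y) := by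
  simp only [Matrix.trace, Matrix.diag, Matrix.mul_apply, Matrix.vecMulVec_apply,
    dotProduct, Matrix.mulVec, Pi.star_apply]
  congr 1; ext i
  rw [Finset.mul_sum]
  congr 1; ext j
  ring

lemma trace_vecMulVec' {m : Type*} [Fintype m] (y z : m → ℂ) :
    (vecMulVec y z).trace = ∑ i, y i * z i := by
  simp [Matrix.trace, Matrix.diag, Matrix.vecMulVec_apply]

lemma star_vecMul_unitary {m : Type*} [Fintype m] [DecidableEq m]
    (U : Matrix m m ℂ) (y : m → ℂ) :
    star y ᵥ* U = star ((star U) *ᵥ y) := by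
  rw [star_mulVec, star_eq_conjTranspose, conjTranspose_conjTranspose]

lemma quadform_spectral {m : ℕ} {Y : Matrix (Fin m) (Fin m) ℂ} (hY : Y.IsHermitian)
    (y : Fin m → ℂ) :
    star y ⬝ᵥ (Y *ᵥ y) =
      ∑ p, ((hY.eigenvalues p *
        Complex.normSq ((star (hY.eigenvectorUnitary : Matrix (Fin m) (Fin m) ℂ) *ᵥ y) p) : ℝ) : ℂ) := by
  set U : Matrix (Fin m) (Fin m) ℂ := (hY.eigenvectorUnitary : Matrix (Fin m) (Fin m) ℂ) with hU
  set w : Fin m → ℂ := star U *ᵥ y with hw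
  conv_lhs => rw [hY.spectral_theorem, Unitary.conjStarAlgAut_apply]
  rw [← mulVec_mulVec, ← mulVec_mulVec, dotProduct_mulVec, star_vecMul_unitary, ← hU, ← hw]
  simp only [dotProduct, mulVec_diagonal, Pi.star_apply, Function.comp]
  refine Finset.sum_congr rfl fun p _ => ?_
  have : ((RCLike.ofReal (hY.eigenvalues p) : ℂ)) = ((hY.eigenvalues p : ℝ) : ℂ) := rfl
  rw [Complex.ofReal_mul, Complex.normSq_eq_conj_mul_self, ← this, starRingEnd_apply]
  ring

lemma dot_unitary_self {m : Type*} [Fintype m] [DecidableEq m]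
    (U : Matrix m m ℂ) (hU : U * star U = 1) (y : m → ℂ) :
    star ((star U) *ᵥ y) ⬝ᵥ ((star U) *ᵥ y) = star y ⬝ᵥ y := by
  rw [← star_vecMul_unitary, ← dotProduct_mulVec, mulVec_mulVec, hU, one_mulVec]

lemma dot_self_eq_sum_normSq {m : Type*} [Fintype m] (w : m → ℂ) :
    star w ⬝ᵥ w = ((∑ p, Complex.normSq (w p) : ℝ) : ℂ) := by
  push_cast
  refine Finset.sum_congr rfl fun p _ => ?_
  rw [Complex.normSq_eq_conj_mul_self]
  rfl

lemma sum_ite_lt_card {m k : ℕ} (hkm : k ≤ m) :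
    ∑ i : Fin m, (if (i : ℕ) < k then (1:ℝ) else 0) = k := by
  rw [Fin.sum_univ_eq_sum_range (fun i => if i < k then (1:ℝ) else 0)]
  have h : (Finset.range m).filter (fun i => i < k) = Finset.range k := by
    ext i; simp; omega
  rw [← Finset.sum_filter, h]
  simp

lemma key_ineq {m k : ℕ} (hk1 : 1 ≤ k) (hkm : k ≤ m) (ev c : Fin m → ℝ)
    (hc0 : ∀ p, 0 ≤ c p) (hc1 : ∀ p, c p ≤ 1) (hsum : ∑ p, c p = k) :
    ∑ p, ev p * c p ≤ ∑ i : Fin m, (if (i : ℕ) < k then ev (Tuple.sort ev i.rev) else 0) := by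
  set σ := Tuple.sort ev with hσ
  have hμ : Monotone (ev ∘ σ) := Tuple.monotone_sort ev
  set μ : Fin m → ℝ := ev ∘ σ with hμdef
  set d : Fin m → ℝ := c ∘ σ with hd
  have hL : ∑ p, ev p * c p = ∑ i, μ i * d i := by
    rw [← Equiv.sum_comp σ (fun p => ev p * c p)]
    rfl
  have hR : ∑ i : Fin m, (if (i : ℕ) < k then ev (σ i.rev) else 0)
      = ∑ i : Fin m, (if ((i.rev : Fin m) : ℕ) < k then μ i else 0) := by
    rw [← Equiv.sum_comp (Fin.revPerm) (fun i => if ((Fin.rev i : Fin m) : ℕ) < k then μ i else 0)]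
    refine Finset.sum_congr rfl fun i _ => ?_
    simp [Fin.rev_rev, μ]
  rw [hL, hR]
  have hmk : m - k < m := by omega
  set t : ℝ := μ ⟨m - k, hmk⟩ with ht
  have hst : ∑ i : Fin m, (if ((i.rev : Fin m) : ℕ) < k then (1:ℝ) else 0) = k := by
    rw [← Equiv.sum_comp (Fin.revPerm) (fun i => if ((Fin.rev i : Fin m) : ℕ) < k then (1:ℝ) else 0)]
    simpa [Fin.rev_rev] using sum_ite_lt_card (m := m) hkm
  have hds : ∑ i, d i = k := by
    rw [hd, ← hsum]
    exact Equiv.sum_comp σ c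
  have hpt : ∀ i : Fin m, μ i * d i - (if ((i.rev : Fin m) : ℕ) < k then μ i else 0)
      ≤ t * (d i - (if ((i.rev : Fin m) : ℕ) < k then (1:ℝ) else 0)) := by
    intro i
    have hrev : ((i.rev : Fin m) : ℕ) = m - 1 - (i : ℕ) := by
      simp [Fin.rev]; omega
    by_cases hik : ((i.rev : Fin m) : ℕ) < k
    · have hge : (⟨m - k, hmk⟩ : Fin m) ≤ i := by
        rw [Fin.le_def]; simp; omega
      have htle : t ≤ μ i := hμ hge
      have h1 : d i ≤ 1 := hc1 _
      simp only [hik, if_pos]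
      nlinarith
    · have hle : i ≤ (⟨m - k, hmk⟩ : Fin m) := by
        rw [Fin.le_def]; simp; omega
      have htge : μ i ≤ t := hμ hle
      have h0 : 0 ≤ d i := hc0 _
      simp only [hik, if_neg, not_false_iff]
      nlinarith
  have hsum' := Finset.sum_le_sum (fun i (_ : i ∈ Finset.univ) => hpt i)
  have e1 : ∑ i, (μ i * d i - (if ((i.rev : Fin m) : ℕ) < k then μ i else 0))
      = (∑ i, μ i * d i) - ∑ i : Fin m, (if ((i.rev : Fin m) : ℕ) < k then μ i else 0) :=
    Finset.sum_sub_distrib _ _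
  have e2 : ∑ i, t * (d i - (if ((i.rev : Fin m) : ℕ) < k then (1:ℝ) else 0)) = 0 := by
    rw [← Finset.mul_sum, Finset.sum_sub_distrib, hds, hst, sub_self, mul_zero]
  rw [e1, e2] at hsum'
  linarith

lemma bessel_cols {m k : ℕ} {Y : Matrix (Fin m) (Fin m) ℂ} (hY : Y.IsHermitian)
    (y : Fin k → Fin m → ℂ) (hy : ∀ p q, star (y p) ⬝ᵥ y q = if p = q then 1 else 0) (p : Fin m) :
    ∑ j, Complex.normSq ((star (hY.eigenvectorUnitary : Matrix (Fin m) (Fin m) ℂ) *ᵥ y j) p) ≤ 1 := by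
  classical
  set e : Fin k → EuclideanSpace ℂ (Fin m) := fun j => (WithLp.equiv 2 _).symm (y j) with he_def
  have he : Orthonormal ℂ e := by
    rw [orthonormal_iff_ite]
    intro a b
    rw [he_def, EuclideanSpace.inner_eq_star_dotProduct, dotProduct_comm]
    exact hy a b
  have hb := he.sum_inner_products_le (𝕜 := ℂ) (x := hY.eigenvectorBasis p) (s := Finset.univ)
  have hnorm : ‖hY.eigenvectorBasis p‖ = 1 := hY.eigenvectorBasis.orthonormal.1 p
  rw [hnorm] at hb
  norm_num at hb
  refine le_trans (le_of_eq (Finset.sum_congr rfl fun j _ => ?_)) hb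
  have h2 : (∑ l, (starRingEnd ℂ) (e j l) * hY.eigenvectorBasis p l)
      = star ((star (hY.eigenvectorUnitary : Matrix (Fin m) (Fin m) ℂ) *ᵥ y j) p) := by
    simp only [he_def, WithLp.equiv_symm_apply, WithLp.ofLp_toLp, Matrix.mulVec, dotProduct,
      Matrix.star_apply, Pi.star_apply, Matrix.IsHermitian.eigenvectorUnitary_apply,
      star_sum, star_mul', star_star, starRingEnd_apply]
    exact Finset.sum_congr rfl fun l _ => (mul_comm _ _)
  have h2' : ⟪e j, hY.eigenvectorBasis p⟫_ℂ
      = star ((star (hY.eigenvectorUnitary : Matrix (Fin m) (Fin m) ℂ) *ᵥ y j) p) := by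
    rw [← h2, EuclideanSpace.inner_eq_star_dotProduct, dotProduct_comm]; rfl
  rw [h2', Complex.normSq_eq_norm_sq, norm_star]

lemma sumTopEigs_eq {m k : ℕ} (hkm : k ≤ m) (Y : Matrix (Fin m) (Fin m) ℂ) :
    sumTopEigs k Y = ∑ j : Fin k, eigsDesc Y (Fin.castLE hkm j) := by
  classical
  rw [sumTopEigs, ← Finset.sum_filter]
  refine Finset.sum_bij' (fun (i : Fin m) hi => (⟨(i : ℕ), by simpa using hi⟩ : Fin k))
    (fun (j : Fin k) _ => Fin.castLE hkm j) ?_ ?_ ?_ ?_ ?_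
  · intro a ha; exact Finset.mem_univ _
  · intro b hb
    simp [Fin.castLE]
  · intro a ha; rfl
  · intro b hb; rfl
  · intro a ha; rfl

lemma kyFan_le {m k : ℕ} (hk1 : 1 ≤ k) (hkm : k ≤ m)
    {Y : Matrix (Fin m) (Fin m) ℂ} (hY : Y.IsHermitian)
    (y : Fin k → Fin m → ℂ)
    (hy : ∀ p q, star (y p) ⬝ᵥ y q = if p = q then 1 else 0) :
    ∑ j, ((Y * vecMulVec (y j) (star (y j))).trace).re ≤ sumTopEigs k Y := by
  classical
  set U : Matrix (Fin m) (Fin m) ℂ := (hY.eigenvectorUnitary : Matrix (Fin m) (Fin m) ℂ) with hUdef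
  set w : Fin k → Fin m → ℂ := fun j => star U *ᵥ y j with hwdef
  set c : Fin m → ℝ := fun p => ∑ j, Complex.normSq (w j p) with hcdef
  have hterm : ∀ j, ((Y * vecMulVec (y j) (star (y j))).trace).re
      = ∑ p, hY.eigenvalues p * Complex.normSq (w j p) := by
    intro j
    rw [trace_mul_vecMulVec, quadform_spectral hY]
    rw [Complex.re_sum]
    simp
    rfl
  have hsum1 : ∀ j, ∑ p, Complex.normSq (w j p) = 1 := by
    intro j
    have h1 : star (w j) ⬝ᵥ w j = star (y j) ⬝ᵥ y j :=
      dot_unitary_self U (Matrix.mem_unitaryGroup_iff.mp hY.eigenvectorUnitary.2) (y j)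
    rw [hy j j, if_pos rfl, dot_self_eq_sum_normSq] at h1
    exact_mod_cast h1
  have hLHS : ∑ j, ((Y * vecMulVec (y j) (star (y j))).trace).re
      = ∑ p, hY.eigenvalues p * c p := by
    rw [Finset.sum_congr rfl fun j _ => hterm j, Finset.sum_comm]
    exact Finset.sum_congr rfl fun p _ => by rw [hcdef, Finset.mul_sum]
  rw [hLHS]
  have hfin := key_ineq hk1 hkm hY.eigenvalues c
    (fun p => Finset.sum_nonneg fun j _ => Complex.normSq_nonneg _)
    (fun p => bessel_cols hY y hy p)
    (by rw [Finset.sum_comm]; simp [hcdef, hsum1])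
  refine hfin.trans (le_of_eq ?_)
  rw [sumTopEigs]
  refine Finset.sum_congr rfl fun i _ => ?_
  by_cases h : (i : ℕ) < k
  · simp only [h, if_pos]
    rw [eigsDesc, dif_pos hY]
  · simp [h]

lemma inner_eq_dot {m : ℕ} (a b : EuclideanSpace ℂ (Fin m)) :
    ⟪a, b⟫_ℂ = star (⇑a : Fin m → ℂ) ⬝ᵥ (⇑b : Fin m → ℂ) := by
  rw [EuclideanSpace.inner_eq_star_dotProduct, dotProduct_comm]

lemma kyFan_exists {m k : ℕ} (hkm : k ≤ m)
    {Y : Matrix (Fin m) (Fin m) ℂ} (hY : Y.IsHermitian) :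
    ∃ y : Fin k → Fin m → ℂ, (∀ p q, star (y p) ⬝ᵥ y q = if p = q then 1 else 0) ∧
      ∑ j, ((Y * vecMulVec (y j) (star (y j))).trace).re = sumTopEigs k Y := by
  classical
  set P : Fin k → Fin m := fun j => Tuple.sort hY.eigenvalues ((Fin.castLE hkm j).rev) with hP
  have hPinj : Function.Injective P := by
    intro a b hab
    have := (Tuple.sort hY.eigenvalues).injective hab
    have := Fin.rev_injective this
    exact Fin.castLE_injective hkm this
  set y : Fin k → Fin m → ℂ := fun j => ⇑(hY.eigenvectorBasis (P j)) with hyd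
  have hon := orthonormal_iff_ite.mp hY.eigenvectorBasis.orthonormal
  have hortho : ∀ p q, star (y p) ⬝ᵥ y q = if p = q then 1 else 0 := by
    intro p q
    have h1 := hon (P p) (P q)
    rw [inner_eq_dot] at h1
    rw [hyd]
    rw [h1]
    by_cases h : p = q
    · simp [h]
    · have : P p ≠ P q := fun hc => h (hPinj hc)
      simp [h, this]
  refine ⟨y, hortho, ?_⟩
  have hval : ∀ j, ((Y * vecMulVec (y j) (star (y j))).trace).re = hY.eigenvalues (P j) := by
    intro j
    rw [trace_mul_vecMulVec]
    have h2 : Y *ᵥ y j = hY.eigenvalues (P j) • y j := hY.mulVec_eigenvectorBasis (P j)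
    rw [h2, dotProduct_smul]
    have h3 : star (y j) ⬝ᵥ y j = 1 := by rw [hortho j j, if_pos rfl]
    rw [h3]
    simp [Complex.real_smul]
  rw [Finset.sum_congr rfl fun j _ => hval j, sumTopEigs_eq hkm]
  refine Finset.sum_congr rfl fun j _ => ?_
  rw [eigsDesc, dif_pos hY]

lemma posSemidef_vecMulVec_star {n : Type*} [Fintype n] (x : n → ℂ) :
    (vecMulVec x (star x)).PosSemidef := by
  rw [Matrix.posSemidef_iff_dotProduct_mulVec]
  constructor
  · ext i j
    simp [Matrix.conjTranspose_apply, Matrix.vecMulVec_apply, star_mul', mul_comm]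
  · intro z
    have h : star z ⬝ᵥ (vecMulVec x (star x) *ᵥ z)
        = (star z ⬝ᵥ x) * star (star z ⬝ᵥ x) := by
      simp only [Matrix.mulVec, dotProduct, Matrix.vecMulVec_apply, Pi.star_apply,
        star_sum, star_mul', star_star, Finset.mul_sum, Finset.sum_mul]
      rw [Finset.sum_comm]
      refine Finset.sum_congr rfl fun i _ => Finset.sum_congr rfl fun j _ => ?_
      ring
    rw [h]
    exact mul_star_self_nonneg _

lemma trace_vecMulVec_star {n : Type*} [Fintype n] (x : n → ℂ) :
    (vecMulVec x (star x)).trace = star x ⬝ᵥ x := by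
  rw [trace_vecMulVec']
  exact Finset.sum_congr rfl fun i _ => mul_comm _ _

lemma spectral_decomp {n : ℕ} {X : Matrix (Fin n) (Fin n) ℂ} (hX : X.IsHermitian) :
    X = ∑ q, hX.eigenvalues q •
      vecMulVec ⇑(hX.eigenvectorBasis q) (star ⇑(hX.eigenvectorBasis q)) := by
  conv_lhs => rw [hX.spectral_theorem, Unitary.conjStarAlgAut_apply]
  ext i j
  rw [Matrix.mul_apply, Matrix.sum_apply]
  refine Finset.sum_congr rfl fun q _ => ?_
  rw [Matrix.mul_apply]
  have hdiag : ∀ r, (diagonal (RCLike.ofReal ∘ hX.eigenvalues) : Matrix (Fin n) (Fin n) ℂ) r q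
      = if r = q then ((hX.eigenvalues q : ℝ) : ℂ) else 0 := by
    intro r
    by_cases h : r = q
    · subst h; simp [Matrix.diagonal_apply_eq]
    · simp [Matrix.diagonal_apply_ne _ h, h]
  rw [Finset.sum_congr rfl fun r _ => by rw [hdiag r]]
  simp only [mul_ite, mul_zero, Finset.sum_ite_eq', Finset.mem_univ, if_pos, if_true]
  rw [Matrix.smul_apply, Matrix.vecMulVec_apply, Complex.real_smul, Matrix.star_apply]
  simp only [Pi.star_apply]
  rw [Matrix.IsHermitian.eigenvectorUnitary_apply, Matrix.IsHermitian.eigenvectorUnitary_apply]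
  ring

end Helpers

/-- For a real-linear map τ between Hermitian matrix spaces and 1 ≤ k ≤ m,
the maximum over density matrices X of the sum of the k largest eigenvalues of τ(X) equals
the maximum over unit vectors x ∈ ℂⁿ and orthonormal systems y₁,…,y_k ∈ ℂᵐ of
∑_j tr(τ(x x*) (y_j y_j*)). -/
theorem stmt_1 {n m : ℕ} (k : ℕ) (hk1 : 1 ≤ k) (hkm : k ≤ m)
    (τ : Matrix (Fin n) (Fin n) ℂ →ₗ[ℝ] Matrix (Fin m) (Fin m) ℂ)
    (hτ : ∀ X : Matrix (Fin n) (Fin n) ℂ, X.IsHermitian → (τ X).IsHermitian) :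
    sSup {c : ℝ | ∃ X : Matrix (Fin n) (Fin n) ℂ,
        X.PosSemidef ∧ X.trace = 1 ∧ c = sumTopEigs k (τ X)} =
    sSup {c : ℝ | ∃ (x : Fin n → ℂ) (y : Fin k → Fin m → ℂ),
        star x ⬝ᵥ x = 1 ∧ (∀ p q, star (y p) ⬝ᵥ y q = if p = q then 1 else 0) ∧
        c = ∑ j, ((τ (Matrix.vecMulVec x (star x)) *
          Matrix.vecMulVec (y j) (star (y j))).trace).re} := by
  classical
  apply csSup_eq_csSup_of_forall_exists_le
  · rintro c ⟨X, hX, htr, rfl⟩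
    have hXH : X.IsHermitian := hX.1
    have hτX : (τ X).IsHermitian := hτ X hXH
    obtain ⟨y, hy, hval⟩ := kyFan_exists hkm hτX
    set u : Fin n → (Fin n → ℂ) := fun q => ⇑(hXH.eigenvectorBasis q) with hu
    have huunit : ∀ q, star (u q) ⬝ᵥ u q = 1 := by
      intro q
      have h1 := orthonormal_iff_ite.mp hXH.eigenvectorBasis.orthonormal q q
      rw [inner_eq_dot] at h1
      simpa using h1
    set g : Fin n → ℝ := fun q =>
      ∑ j, ((τ (vecMulVec (u q) (star (u q))) * vecMulVec (y j) (star (y j))).trace).re with hg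
    have hdecomp := spectral_decomp hXH
    have hlin : sumTopEigs k (τ X) = ∑ q, hXH.eigenvalues q * g q := by
      rw [← hval]
      have hτXd : τ X = ∑ q, hXH.eigenvalues q • τ (vecMulVec (u q) (star (u q))) := by
        conv_lhs => rw [hdecomp]
        rw [map_sum]
        exact Finset.sum_congr rfl fun q _ => by rw [_root_.map_smul]
      calc ∑ j, ((τ X * vecMulVec (y j) (star (y j))).trace).re
          = ∑ j, ∑ q, hXH.eigenvalues q *
              ((τ (vecMulVec (u q) (star (u q))) * vecMulVec (y j) (star (y j))).trace).re := by
            refine Finset.sum_congr rfl fun j _ => ?_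
            rw [hτXd, Finset.sum_mul, trace_sum, Complex.re_sum]
            refine Finset.sum_congr rfl fun q _ => ?_
            rw [smul_mul_assoc, trace_smul, Complex.real_smul, Complex.re_ofReal_mul]
        _ = ∑ q, hXH.eigenvalues q * g q := by
            rw [Finset.sum_comm]
            exact Finset.sum_congr rfl fun q _ => by rw [hg, Finset.mul_sum]
    have hp0 : ∀ q, 0 ≤ hXH.eigenvalues q := fun q => hX.eigenvalues_nonneg q
    have hp1 : ∑ q, hXH.eigenvalues q = 1 := by
      have h2 : X.trace = ∑ q, ((hXH.eigenvalues q : ℝ) : ℂ) := by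
        conv_lhs => rw [hdecomp]
        rw [trace_sum]
        refine Finset.sum_congr rfl fun q _ => ?_
        rw [trace_smul, trace_vecMulVec_star, huunit q, Complex.real_smul, mul_one]
      rw [htr] at h2
      have h3 := congrArg Complex.re h2.symm
      simpa [Complex.re_sum] using h3
    have hex : ∃ q, sumTopEigs k (τ X) ≤ g q := by
      by_contra hcon
      push_neg at hcon
      have hq0 : ∃ q, 0 < hXH.eigenvalues q := by
        by_contra hq
        push_neg at hq
        have h4 : ∑ q, hXH.eigenvalues q = 0 :=
          Finset.sum_eq_zero fun q _ => le_antisymm (hq q) (hp0 q)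
        rw [hp1] at h4; norm_num at h4
      obtain ⟨q0, hq0⟩ := hq0
      have hstrict : ∑ q, hXH.eigenvalues q * g q
          < ∑ q, hXH.eigenvalues q * sumTopEigs k (τ X) := by
        refine Finset.sum_lt_sum
          (fun q _ => mul_le_mul_of_nonneg_left (hcon q).le (hp0 q))
          ⟨q0, Finset.mem_univ _, ?_⟩
        exact mul_lt_mul_of_pos_left (hcon q0) hq0
      rw [← Finset.sum_mul, hp1, one_mul, ← hlin] at hstrict
      exact lt_irrefl _ hstrict
    obtain ⟨q, hq⟩ := hex
    exact ⟨g q, ⟨u q, y, huunit q, hy, by rw [hg]⟩, hq⟩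
  · rintro d ⟨x, y, hx, hy, rfl⟩
    have hpsd := posSemidef_vecMulVec_star x
    have htr1 : (vecMulVec x (star x)).trace = 1 := by rw [trace_vecMulVec_star, hx]
    refine ⟨sumTopEigs k (τ (vecMulVec x (star x))),
      ⟨vecMulVec x (star x), hpsd, htr1, rfl⟩, ?_⟩
    exact kyFan_le hk1 hkm (hτ _ hpsd.1) y hy
end

section
/- Let τ : S_n(ℂ) → S_m(ℂ) be a completely positive map, τ(X) = ∑_{i=1}^l A_i X A_i^* with A_i ∈ ℂ^{m×n}, and set A(τ) := ∑_{i=1}^l A_i A_i^*. Then for every density matrix X ∈ S_n(ℂ) and every 1 ≤ k ≤ m, ∑_{j=1}^k λ_j(τ(X)) ≤ ∑_{j=1}^k λ_j(A(τ)). -/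
open scoped ComplexOrder
open Matrix Kronecker

namespace KyFanAux

/-- conjugation of a real diagonal by a matrix -/
noncomputable def Phi {N : ℕ} (V : Matrix (Fin N) (Fin N) ℂ) (t : Fin N → ℝ) :
    Matrix (Fin N) (Fin N) ℂ :=
  V * Matrix.diagonal (fun i => (t i : ℂ)) * Vᴴ

variable {N : ℕ} {V : Matrix (Fin N) (Fin N) ℂ}

lemma Phi_posSemidef (hV : V ∈ Matrix.unitaryGroup (Fin N) ℂ) {t : Fin N → ℝ}
    (ht : ∀ i, 0 ≤ t i) : (Phi V t).PosSemidef := by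
  refine (Matrix.posSemidef_diagonal_iff.mpr ?_).mul_mul_conjTranspose_same V
  intro i
  exact_mod_cast Complex.zero_le_real.mpr (ht i)

lemma Phi_sub (t s : Fin N → ℝ) : Phi V t - Phi V s = Phi V (t - s) := by
  unfold Phi
  have hd : (fun i => (((t - s) i : ℝ) : ℂ)) = fun i => (t i : ℂ) - (s i : ℂ) := by
    funext i; push_cast [Pi.sub_apply]; ring
  rw [← Matrix.sub_mul, ← Matrix.mul_sub, Matrix.diagonal_sub, hd]

lemma Phi_one (hV : V ∈ Matrix.unitaryGroup (Fin N) ℂ) : Phi V (fun _ => 1) = 1 := by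
  unfold Phi
  simp only [Complex.ofReal_one, Matrix.diagonal_one, Matrix.mul_one]
  simpa [star_eq_conjTranspose] using Matrix.mem_unitaryGroup_iff.mp hV

lemma trace_mul_Phi (hV : V ∈ Matrix.unitaryGroup (Fin N) ℂ)
    (M : Matrix (Fin N) (Fin N) ℂ) (t : Fin N → ℝ) :
    (M * Phi V t).trace = ∑ i, (Vᴴ * M * V) i i * (t i : ℂ) := by
  unfold Phi
  rw [← Matrix.mul_assoc M, Matrix.trace_mul_cycle, ← Matrix.mul_assoc]
  simp [Matrix.trace, Matrix.diag, Matrix.mul_diagonal]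

lemma Phi_mul_Phi (hV : V ∈ Matrix.unitaryGroup (Fin N) ℂ) (t s : Fin N → ℝ) :
    Phi V t * Phi V s = Phi V (fun i => t i * s i) := by
  have h1 : Vᴴ * V = 1 := by
    simpa [star_eq_conjTranspose] using Matrix.mem_unitaryGroup_iff'.mp hV
  unfold Phi
  calc V * Matrix.diagonal (fun i => (t i : ℂ)) * Vᴴ * (V * Matrix.diagonal (fun i => (s i : ℂ)) * Vᴴ)
      = V * (Matrix.diagonal (fun i => (t i : ℂ)) * (Vᴴ * V) * Matrix.diagonal (fun i => (s i : ℂ))) * Vᴴ := by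
        simp only [Matrix.mul_assoc]
    _ = V * Matrix.diagonal (fun i => ((t i * s i : ℝ) : ℂ)) * Vᴴ := by
        rw [h1, Matrix.mul_one, Matrix.diagonal_mul_diagonal]
        push_cast
        rfl

lemma trace_Phi (hV : V ∈ Matrix.unitaryGroup (Fin N) ℂ) (t : Fin N → ℝ) :
    (Phi V t).trace = ((∑ i, t i : ℝ) : ℂ) := by
  have := trace_mul_Phi hV 1 t
  rw [Matrix.one_mul] at this
  rw [this]
  have h1 : Vᴴ * V = 1 := by
    simpa [star_eq_conjTranspose] using Matrix.mem_unitaryGroup_iff'.mp hV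
  rw [Matrix.mul_one, h1]
  push_cast
  simp [Matrix.one_apply]

lemma spectral {B : Matrix (Fin N) (Fin N) ℂ} (hB : B.IsHermitian) :
    B = Phi (hB.eigenvectorUnitary : Matrix (Fin N) (Fin N) ℂ) hB.eigenvalues := by
  have h := hB.spectral_theorem
  unfold Phi
  rw [Unitary.conjStarAlgAut_apply] at h
  exact h

lemma psd_diag_nonneg {M : Matrix (Fin N) (Fin N) ℂ} (hM : M.PosSemidef) (i : Fin N) :
    0 ≤ M i i := by
  exact hM.diag_nonneg

lemma psd_trace_nonneg {M : Matrix (Fin N) (Fin N) ℂ} (hM : M.PosSemidef) :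
    0 ≤ M.trace := by
  exact Finset.sum_nonneg fun i _ => psd_diag_nonneg hM i

lemma psd_trace_mul_nonneg {M P : Matrix (Fin N) (Fin N) ℂ} (hM : M.PosSemidef)
    (hP : P.PosSemidef) : 0 ≤ (M * P).trace := by
  obtain ⟨W, rfl⟩ : ∃ W : Matrix (Fin N) (Fin N) ℂ, P = Wᴴ * W := by
    open scoped MatrixOrder in
    exact CStarAlgebra.nonneg_iff_eq_star_mul_self.mp hP.nonneg
  rw [← Matrix.mul_assoc, Matrix.trace_mul_cycle]
  exact psd_trace_nonneg (hM.mul_mul_conjTranspose_same W)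

lemma count_lt (k : ℕ) (hkN : k ≤ N) :
    ∑ j : Fin N, (if (j : ℕ) < k then (1 : ℝ) else 0) = k := by
  rw [Fin.sum_univ_eq_sum_range (fun j => if j < k then (1 : ℝ) else 0) N]
  rw [Finset.sum_boole]
  have : (Finset.range N).filter (· < k) = Finset.range k := by
    ext j; simp; omega
  simp [this]


lemma comb {N k : ℕ} (hk1 : 1 ≤ k) (hkN : k ≤ N) (μ c : Fin N → ℝ)
    (hμ : Antitone μ) (hc0 : ∀ j, 0 ≤ c j) (hc1 : ∀ j, c j ≤ 1)
    (hsum : ∑ j, c j = k) :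
    ∑ j, c j * μ j ≤ ∑ j : Fin N, if (j : ℕ) < k then μ j else 0 := by
  set t : ℝ := μ ⟨k - 1, by omega⟩ with ht
  have key : ∀ j : Fin N, c j * μ j - (if (j : ℕ) < k then μ j else 0)
      ≤ (c j - (if (j : ℕ) < k then 1 else 0)) * t := by
    intro j
    by_cases hj : (j : ℕ) < k
    · simp only [if_pos hj]
      have hle : j ≤ (⟨k - 1, by omega⟩ : Fin N) := by
        rw [Fin.le_def]; simp; omega
      have hμj : t ≤ μ j := hμ hle
      have h1 : c j - 1 ≤ 0 := by linarith [hc1 j]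
      nlinarith
    · simp only [if_neg hj]
      have hle : (⟨k - 1, by omega⟩ : Fin N) ≤ j := by
        rw [Fin.le_def]; simp; omega
      have hμj : μ j ≤ t := hμ hle
      have h0 := hc0 j
      nlinarith
  have hsumle := Finset.sum_le_sum (fun j (_ : j ∈ Finset.univ) => key j)
  rw [Finset.sum_sub_distrib] at hsumle
  have hr : ∑ j : Fin N, (c j - (if (j : ℕ) < k then 1 else 0)) * t
      = (∑ j, c j) * t - (∑ j : Fin N, (if (j : ℕ) < k then (1:ℝ) else 0)) * t := by
    rw [← Finset.sum_mul, Finset.sum_sub_distrib, sub_mul]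
  rw [hr, hsum, count_lt k hkN, sub_self] at hsumle
  linarith

end KyFanAux

namespace KyFanAux

/-- the permutation sorting eigenvalues in decreasing order -/
noncomputable def tau {N : ℕ} {B : Matrix (Fin N) (Fin N) ℂ} (hB : B.IsHermitian) :
    Equiv.Perm (Fin N) :=
  Fin.revPerm.trans (Tuple.sort hB.eigenvalues)

lemma eigsDesc_eq {N : ℕ} {B : Matrix (Fin N) (Fin N) ℂ} (hB : B.IsHermitian) (i : Fin N) :
    eigsDesc B i = hB.eigenvalues (tau hB i) := by
  simp [eigsDesc, dif_pos hB, tau]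

lemma eigsDesc_antitone {N : ℕ} {B : Matrix (Fin N) (Fin N) ℂ} (hB : B.IsHermitian) :
    Antitone (eigsDesc B) := by
  intro i j hij
  simp only [eigsDesc, dif_pos hB]
  exact Tuple.monotone_sort hB.eigenvalues (Fin.rev_le_rev.mpr hij)

lemma sumTopEigs_eq {N k : ℕ} {B : Matrix (Fin N) (Fin N) ℂ} (hB : B.IsHermitian) :
    sumTopEigs k B = ∑ j : Fin N, if (j : ℕ) < k then hB.eigenvalues (tau hB j) else 0 := by
  unfold sumTopEigs
  congr 1; funext j
  rw [eigsDesc_eq hB]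

lemma kyFan_upper {N k : ℕ} (hk1 : 1 ≤ k) (hkN : k ≤ N) {B M : Matrix (Fin N) (Fin N) ℂ}
    (hB : B.IsHermitian) (hM : M.PosSemidef) (hM1 : ((1 : Matrix (Fin N) (Fin N) ℂ) - M).PosSemidef)
    (hMtr : M.trace = (k : ℂ)) :
    (M * B).trace.re ≤ sumTopEigs k B := by
  set V := (hB.eigenvectorUnitary : Matrix (Fin N) (Fin N) ℂ) with hVdef
  have hV : V ∈ Matrix.unitaryGroup (Fin N) ℂ := hB.eigenvectorUnitary.2
  set Q := Vᴴ * M * V with hQdef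
  have hQ : Q.PosSemidef := hM.conjTranspose_mul_mul_same V
  have hQ1 : ((1 : Matrix (Fin N) (Fin N) ℂ) - Q).PosSemidef := by
    have h := hM1.conjTranspose_mul_mul_same V
    have h1 : Vᴴ * ((1 : Matrix (Fin N) (Fin N) ℂ) - M) * V = 1 - Q := by
      rw [Matrix.mul_sub, Matrix.mul_one, Matrix.sub_mul, hQdef]
      congr 1
      simpa [star_eq_conjTranspose] using Matrix.mem_unitaryGroup_iff'.mp hV
    rwa [h1] at h
  set c : Fin N → ℝ := fun i => (Q i i).re with hcdef
  have hc0 : ∀ i, 0 ≤ c i := fun i => (Complex.le_def.mp (psd_diag_nonneg hQ i)).1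
  have hc1 : ∀ i, c i ≤ 1 := by
    intro i
    have h := (Complex.le_def.mp (psd_diag_nonneg hQ1 i)).1
    simp only [Matrix.sub_apply, Matrix.one_apply_eq, Complex.sub_re, Complex.one_re,
      Complex.zero_re] at h
    show (Q i i).re ≤ 1
    linarith
  have hQtr : Q.trace = (k : ℂ) := by
    rw [hQdef, Matrix.trace_mul_cycle]
    have h1 : V * Vᴴ = 1 := by
      simpa [star_eq_conjTranspose] using Matrix.mem_unitaryGroup_iff.mp hV
    rw [h1, Matrix.one_mul, hMtr]
  have hcsum : ∑ i, c i = k := by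
    have : (Q.trace).re = k := by rw [hQtr]; simp
    rw [← this]
    simp [Matrix.trace, Matrix.diag, Complex.re_sum, hcdef]
  have htr : (M * B).trace.re = ∑ i, c i * hB.eigenvalues i := by
    conv_lhs => rw [spectral hB, ← hVdef, trace_mul_Phi hV]
    rw [Complex.re_sum]
    congr 1; funext i
    simp [Complex.mul_re, hcdef, hQdef]
  rw [htr, sumTopEigs_eq hB]
  have hre : ∑ i, c i * hB.eigenvalues i
      = ∑ j, (fun j => c (tau hB j)) j * (fun j => hB.eigenvalues (tau hB j)) j := by
    exact (Equiv.sum_comp (tau hB) (fun i => c i * hB.eigenvalues i)).symm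
  rw [hre]
  refine comb hk1 hkN _ _ ?_ (fun j => hc0 _) (fun j => hc1 _) ?_
  · have : (fun j => hB.eigenvalues (tau hB j)) = eigsDesc B := by
      funext j; rw [eigsDesc_eq hB]
    rw [this]
    exact eigsDesc_antitone hB
  · rw [Equiv.sum_comp (tau hB) c, hcsum]

end KyFanAux

namespace KyFanAux

lemma kyFan_mono {N k : ℕ} (hk1 : 1 ≤ k) (hkN : k ≤ N) {B C : Matrix (Fin N) (Fin N) ℂ}
    (hC : C.IsHermitian) (hB : B.IsHermitian) (hBC : (B - C).PosSemidef) :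
    sumTopEigs k C ≤ sumTopEigs k B := by
  set V := (hC.eigenvectorUnitary : Matrix (Fin N) (Fin N) ℂ) with hVdef
  have hV : V ∈ Matrix.unitaryGroup (Fin N) ℂ := hC.eigenvectorUnitary.2
  set t : Fin N → ℝ := fun i => if (((tau hC).symm i : Fin N) : ℕ) < k then 1 else 0 with htdef
  have ht0 : ∀ i, 0 ≤ t i := by
    intro i; rw [htdef]; dsimp only; split_ifs <;> norm_num
  have ht1 : ∀ i, t i ≤ 1 := by
    intro i; rw [htdef]; dsimp only; split_ifs <;> norm_num
  set P := Phi V t with hPdef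
  have hP : P.PosSemidef := Phi_posSemidef hV ht0
  have hP1 : ((1 : Matrix (Fin N) (Fin N) ℂ) - P).PosSemidef := by
    rw [← Phi_one hV, hPdef, Phi_sub]
    exact Phi_posSemidef hV (fun i => by
      simp only [Pi.sub_apply]
      linarith [ht1 i])
  have htau : ∀ j, t (tau hC j) = if (j : ℕ) < k then (1 : ℝ) else 0 := by
    intro j; rw [htdef]; simp
  have htsum : ∑ i, t i = k := by
    rw [← Equiv.sum_comp (tau hC) t, Finset.sum_congr rfl fun j _ => htau j]
    exact count_lt k hkN
  have hPtr : P.trace = (k : ℂ) := by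
    rw [hPdef, trace_Phi hV, htsum]; norm_num
  have hPCre : (P * C).trace.re = sumTopEigs k C := by
    have hPC : (P * C).trace = ((∑ i, t i * hC.eigenvalues i : ℝ) : ℂ) := by
      conv_lhs => rw [spectral hC, ← hVdef]
      rw [hPdef, Phi_mul_Phi hV, trace_Phi hV]
    rw [hPC, Complex.ofReal_re, sumTopEigs_eq hC,
      ← Equiv.sum_comp (tau hC) (fun i => t i * hC.eigenvalues i)]
    refine Finset.sum_congr rfl fun j _ => ?_
    rw [htau j]
    split_ifs <;> simp
  have step : (P * C).trace.re ≤ (P * B).trace.re := by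
    have h := psd_trace_mul_nonneg hP hBC
    rw [Matrix.mul_sub, Matrix.trace_sub] at h
    have h2 := (Complex.le_def.mp h).1
    simp only [Complex.sub_re, Complex.zero_re] at h2
    linarith
  calc sumTopEigs k C = (P * C).trace.re := hPCre.symm
    _ ≤ (P * B).trace.re := step
    _ ≤ sumTopEigs k B := kyFan_upper hk1 hkN hB hP hP1 hPtr

lemma one_sub_psd {N : ℕ} {X : Matrix (Fin N) (Fin N) ℂ} (hX : X.PosSemidef)
    (htr : X.trace = 1) : ((1 : Matrix (Fin N) (Fin N) ℂ) - X).PosSemidef := by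
  have hH := hX.1
  set V := (hH.eigenvectorUnitary : Matrix (Fin N) (Fin N) ℂ) with hVdef
  have hV : V ∈ Matrix.unitaryGroup (Fin N) ℂ := hH.eigenvectorUnitary.2
  have hsum : ∑ i, hH.eigenvalues i = 1 := by
    have h1 : X.trace = ((∑ i, hH.eigenvalues i : ℝ) : ℂ) := by
      conv_lhs => rw [spectral hH, ← hVdef]
      rw [trace_Phi hV]
    rw [htr] at h1
    exact_mod_cast h1.symm
  have hle : ∀ i, hH.eigenvalues i ≤ 1 := by
    intro i
    calc hH.eigenvalues i ≤ ∑ j, hH.eigenvalues j :=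
          Finset.single_le_sum (fun j _ => hX.eigenvalues_nonneg j) (Finset.mem_univ i)
      _ = 1 := hsum
  have heq : (1 : Matrix (Fin N) (Fin N) ℂ) - X = Phi V ((fun _ => 1) - hH.eigenvalues) := by
    rw [← Phi_sub, Phi_one hV, ← spectral hH]
  rw [heq]
  exact Phi_posSemidef hV (fun i => by
    simp only [Pi.sub_apply]
    linarith [hle i])

end KyFanAux

lemma psd_sum {N : ℕ} {ι : Type*} (s : Finset ι) (f : ι → Matrix (Fin N) (Fin N) ℂ)
    (h : ∀ i ∈ s, (f i).PosSemidef) : (∑ i ∈ s, f i).PosSemidef := by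
  classical
  induction s using Finset.induction_on with
  | empty => simpa using (Matrix.PosSemidef.zero : (0 : Matrix (Fin N) (Fin N) ℂ).PosSemidef)
  | insert _ _ hx ih =>
    rw [Finset.sum_insert hx]
    exact (h _ (Finset.mem_insert_self _ _)).add
      (ih fun i hi => h i (Finset.mem_insert_of_mem hi))

/-- For a completely positive map τ(X) = ∑ᵢ Aᵢ X Aᵢ* and A(τ) = ∑ᵢ Aᵢ Aᵢ*,
for every density matrix X and 1 ≤ k ≤ m, the sum of the k largest eigenvalues of τ(X)
is at most the sum of the k largest eigenvalues of A(τ). -/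
theorem stmt_2 {n m l : ℕ} (A : Fin l → Matrix (Fin m) (Fin n) ℂ)
    (X : Matrix (Fin n) (Fin n) ℂ) (hX : X.PosSemidef) (hX1 : X.trace = 1)
    (k : ℕ) (hk1 : 1 ≤ k) (hkm : k ≤ m) :
    sumTopEigs k (∑ i, A i * X * (A i)ᴴ) ≤ sumTopEigs k (∑ i, A i * (A i)ᴴ) := by
  have hC : (∑ i, A i * X * (A i)ᴴ).PosSemidef := by
    exact psd_sum _ _ fun i _ => hX.mul_mul_conjTranspose_same (A i)
  have hB : (∑ i, A i * (A i)ᴴ).PosSemidef := by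
    exact psd_sum _ _ fun i _ => Matrix.posSemidef_self_mul_conjTranspose (A i)
  have h1X : ((1 : Matrix (Fin n) (Fin n) ℂ) - X).PosSemidef := KyFanAux.one_sub_psd hX hX1
  have hdiff : (∑ i, A i * (A i)ᴴ) - (∑ i, A i * X * (A i)ᴴ)
      = ∑ i, A i * ((1 : Matrix (Fin n) (Fin n) ℂ) - X) * (A i)ᴴ := by
    rw [← Finset.sum_sub_distrib]
    refine Finset.sum_congr rfl fun i _ => ?_
    rw [Matrix.mul_sub, Matrix.mul_one, Matrix.sub_mul]
  have hBC : ((∑ i, A i * (A i)ᴴ) - ∑ i, A i * X * (A i)ᴴ).PosSemidef := by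
    rw [hdiff]
    exact psd_sum _ _ fun i _ => h1X.mul_mul_conjTranspose_same (A i)
  exact KyFanAux.kyFan_mono hk1 hkm hC.1 hB.1 hBC
end

section
/- Let τ : S_n(ℂ) → S_m(ℂ) be a quantum channel with Kraus operators A_1,…,A_l, and set A(τ) := ∑_{i=1}^l A_i A_i^*. Then the minimum output entropy satisfies H(τ) ≥ −log λ_1(A(τ)). -/
open scoped ComplexOrder InnerProductSpace
open Matrix Kronecker

section Helpers

variable {k : Type*} [Fintype k] [DecidableEq k]

lemma trace_eq_sum_eigs {M : Matrix k k ℂ} (hM : M.IsHermitian) :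
    M.trace = ∑ i, (hM.eigenvalues i : ℂ) := by
  conv_lhs => rw [hM.spectral_theorem]
  rw [Unitary.conjStarAlgAut_apply, trace_mul_cycle, Matrix.mem_unitaryGroup_iff'.mp hM.eigenvectorUnitary.2, one_mul,
    trace_diagonal]
  simp

lemma star_dot_self_eigenvectorBasis {M : Matrix k k ℂ} (hM : M.IsHermitian) (i : k) :
    star (⇑(hM.eigenvectorBasis i)) ⬝ᵥ ⇑(hM.eigenvectorBasis i) = 1 := by
  have h := hM.eigenvectorBasis.orthonormal.1 i
  have h2 : (⟪hM.eigenvectorBasis i, hM.eigenvectorBasis i⟫_ℂ) = 1 := by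
    rw [inner_self_eq_norm_sq_to_K, h]; norm_num
  rwa [EuclideanSpace.inner_eq_star_dotProduct, dotProduct_comm] at h2

lemma eigenvalues_le_of_posSemidef {M : Matrix k k ℂ} (hM : M.IsHermitian) {c : ℝ}
    (hc : ((c : ℂ) • (1 : Matrix k k ℂ) - M).PosSemidef) (i : k) :
    hM.eigenvalues i ≤ c := by
  set v := ⇑(hM.eigenvectorBasis i) with hv
  have h2 := hc.dotProduct_mulVec_nonneg v
  have hmv : ((c : ℂ) • (1 : Matrix k k ℂ) - M) *ᵥ v
      = ((c - hM.eigenvalues i : ℝ) : ℂ) • v := by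
    rw [sub_mulVec, smul_mulVec, one_mulVec, hM.mulVec_eigenvectorBasis,
      RCLike.real_smul_eq_coe_smul (K := ℂ)]
    push_cast
    rw [sub_smul]
    rfl
  rw [hmv, dotProduct_smul, star_dot_self_eigenvectorBasis hM i, smul_eq_mul, mul_one] at h2
  rw [← sub_nonneg]
  exact_mod_cast Complex.zero_le_real.mp h2

lemma smul_one_sub_posSemidef {M : Matrix k k ℂ} (hM : M.IsHermitian) {c : ℝ}
    (h : ∀ i, hM.eigenvalues i ≤ c) :
    ((c : ℂ) • (1 : Matrix k k ℂ) - M).PosSemidef := by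
  have key : (c : ℂ) • (1 : Matrix k k ℂ) - M
      = (hM.eigenvectorUnitary : Matrix k k ℂ) *
          diagonal (fun i => ((c - hM.eigenvalues i : ℝ) : ℂ)) *
          (star hM.eigenvectorUnitary : Matrix k k ℂ) := by
    have hd : diagonal (fun i => ((c - hM.eigenvalues i : ℝ) : ℂ))
        = (c : ℂ) • (1 : Matrix k k ℂ) - diagonal (RCLike.ofReal ∘ hM.eigenvalues) := by
      ext i j
      rcases eq_or_ne i j with rfl | hij
      · simp only [diagonal_apply_eq, Matrix.sub_apply, Matrix.smul_apply, Matrix.one_apply_eq,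
          Function.comp_apply, smul_eq_mul, mul_one]
        push_cast
        rfl
      · simp [Matrix.diagonal_apply_ne _ hij, hij]
    rw [hd, Matrix.mul_sub, Matrix.sub_mul, Matrix.mul_smul, mul_one, Matrix.smul_mul,
      Matrix.mem_unitaryGroup_iff.mp hM.eigenvectorUnitary.2]
    congr 1
    exact hM.spectral_theorem
  rw [key]
  refine (posSemidef_diagonal_iff.mpr fun i => ?_).mul_mul_conjTranspose_same _
  exact Complex.zero_le_real.mpr (sub_nonneg.mpr (h i))

lemma posSemidef_sum {ι : Type*} (s : Finset ι) (f : ι → Matrix k k ℂ)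
    (h : ∀ i ∈ s, (f i).PosSemidef) : (∑ i ∈ s, f i).PosSemidef :=
  Finset.sum_induction f _ (fun _ _ ha hb => ha.add hb) .zero h

end Helpers

/-- For a quantum channel τ with Kraus operators A₁,…,A_l and
A(τ) = ∑ᵢ Aᵢ Aᵢ*, the minimum output entropy satisfies H(τ) ≥ -log λ₁(A(τ)). -/
theorem stmt_3 {n m l : ℕ} (A : Fin l → Matrix (Fin m) (Fin n) ℂ)
    (hA : ∑ i, (A i)ᴴ * A i = 1) :
    -Real.log (lambdaMax (∑ i, A i * (A i)ᴴ)) ≤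
      minEntropy (fun X : Matrix (Fin n) (Fin n) ℂ => ∑ i, A i * X * (A i)ᴴ) := by
  rcases Nat.eq_zero_or_pos n with hn | hn
  · subst hn
    have hB0 : (∑ i, A i * (A i)ᴴ) = 0 := by
      refine Finset.sum_eq_zero fun i _ => ?_
      ext a b
      simp [Matrix.mul_apply]
    have hminE : minEntropy (fun X : Matrix (Fin 0) (Fin 0) ℂ => ∑ i, A i * X * (A i)ᴴ) = 0 := by
      unfold minEntropy
      convert Real.sInf_empty using 2
      ext h
      simp only [Set.mem_setOf_eq, Set.mem_empty_iff_false, iff_false, not_exists]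
      rintro X ⟨_, hXtr, _⟩
      simp [Matrix.trace] at hXtr
    have hlm : lambdaMax (∑ i, A i * (A i)ᴴ) = 0 := by
      rw [hB0]
      have h0 : (0 : Matrix (Fin m) (Fin m) ℂ).IsHermitian := isHermitian_zero
      unfold lambdaMax
      rw [dif_pos h0]
      have he : ∀ i, h0.eigenvalues i = 0 := by
        intro i
        rw [h0.eigenvalues_eq]
        simp
      rcases isEmpty_or_nonempty (Fin m) with hme | hme
      · exact Real.iSup_of_isEmpty _
      · simp only [he]
        exact ciSup_const
    rw [hlm, hminE, Real.log_zero, neg_zero]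
  · rcases Nat.eq_zero_or_pos m with hm | hm
    · exfalso
      subst hm
      have h0 : (∑ i, (A i)ᴴ * A i) = 0 := by
        refine Finset.sum_eq_zero fun i _ => ?_
        ext a b
        simp [Matrix.mul_apply]
      rw [h0] at hA
      have h1 := congrFun (congrFun hA ⟨0, hn⟩) ⟨0, hn⟩
      simp [Matrix.one_apply] at h1
    · set B := ∑ i, A i * (A i)ᴴ with hBdef
      have hBpsd : B.PosSemidef :=
        posSemidef_sum _ _ fun i _ => posSemidef_self_mul_conjTranspose _
      have hBher := hBpsd.1
      set c := lambdaMax B with hcdef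
      have hc_eq : c = ⨆ i, hBher.eigenvalues i := by
        rw [hcdef]
        unfold lambdaMax
        rw [dif_pos hBher]
      have hle : ∀ i, hBher.eigenvalues i ≤ c := by
        intro i
        rw [hc_eq]
        exact le_ciSup (Set.Finite.bddAbove (Set.finite_range _)) i
      have hcB : ((c : ℂ) • (1 : Matrix (Fin m) (Fin m) ℂ) - B).PosSemidef :=
        smul_one_sub_posSemidef hBher hle
      unfold minEntropy
      apply le_csInf
      · refine ⟨_, (n : ℂ)⁻¹ • 1, ?_, ?_, rfl⟩
        · have hd : ((n : ℂ)⁻¹ • (1 : Matrix (Fin n) (Fin n) ℂ))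
              = diagonal (fun _ => (n : ℂ)⁻¹) := by
            ext a b
            rcases eq_or_ne a b with rfl | hab
            · simp
            · simp [Matrix.one_apply_ne hab, Matrix.diagonal_apply_ne _ hab, hab]
          rw [hd]
          refine posSemidef_diagonal_iff.mpr fun i => ?_
          have h1 : ((n : ℂ)⁻¹) = (((n : ℝ)⁻¹ : ℝ) : ℂ) := by push_cast; rfl
          rw [h1]
          exact Complex.zero_le_real.mpr (by positivity)
        · rw [trace_smul, trace_one]
          simp only [Fintype.card_fin, smul_eq_mul]
          field_simp
      · rintro h ⟨X, hX, hXtr, rfl⟩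
        set Y := ∑ i, A i * X * (A i)ᴴ with hYdef
        have hYpsd : Y.PosSemidef :=
          posSemidef_sum _ _ fun i _ => hX.mul_mul_conjTranspose_same _
        have hYher := hYpsd.1
        have hXher := hX.1
        have htrY : Y.trace = 1 := by
          rw [hYdef, trace_sum]
          rw [Finset.sum_congr rfl fun i _ => trace_mul_cycle (A i) X (A i)ᴴ]
          rw [← trace_sum, ← Finset.sum_mul, hA, Matrix.one_mul, hXtr]
        have hμ0 : ∀ i, 0 ≤ hYher.eigenvalues i := hYpsd.eigenvalues_nonneg
        have hμsum : ∑ i, hYher.eigenvalues i = 1 := by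
          have h1 := trace_eq_sum_eigs hYher
          rw [htrY] at h1
          exact_mod_cast h1.symm
        have hXsum : ∑ i, hXher.eigenvalues i = 1 := by
          have h1 := trace_eq_sum_eigs hXher
          rw [hXtr] at h1
          exact_mod_cast h1.symm
        have hXle : ∀ i, hXher.eigenvalues i ≤ 1 := by
          intro i
          rw [← hXsum]
          exact Finset.single_le_sum (fun j _ => hX.eigenvalues_nonneg j) (Finset.mem_univ i)
        have hX1 : ((1 : Matrix (Fin n) (Fin n) ℂ) - X).PosSemidef := by
          have h1 := smul_one_sub_posSemidef hXher hXle
          simpa using h1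
        have hBY : (B - Y).PosSemidef := by
          have heq : B - Y = ∑ i, A i * ((1 : Matrix (Fin n) (Fin n) ℂ) - X) * (A i)ᴴ := by
            rw [hBdef, hYdef, ← Finset.sum_sub_distrib]
            refine Finset.sum_congr rfl fun i _ => ?_
            rw [Matrix.mul_sub, Matrix.mul_one, Matrix.sub_mul]
          rw [heq]
          exact posSemidef_sum _ _ fun i _ => hX1.mul_mul_conjTranspose_same _
        have hcY : ((c : ℂ) • (1 : Matrix (Fin m) (Fin m) ℂ) - Y).PosSemidef := by
          have heq : (c : ℂ) • (1 : Matrix (Fin m) (Fin m) ℂ) - Y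
              = ((c : ℂ) • 1 - B) + (B - Y) := (sub_add_sub_cancel _ _ _).symm
          rw [heq]
          exact hcB.add hBY
        have hμc : ∀ i, hYher.eigenvalues i ≤ c := eigenvalues_le_of_posSemidef hYher hcY
        show -Real.log c ≤ entropy Y
        unfold entropy
        rw [dif_pos hYher, neg_le_neg_iff]
        calc ∑ i, hYher.eigenvalues i * Real.log (hYher.eigenvalues i)
            ≤ ∑ i, hYher.eigenvalues i * Real.log c := by
              refine Finset.sum_le_sum fun i _ => ?_
              rcases eq_or_lt_of_le (hμ0 i) with h0 | hpos
              · simp [← h0]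
              · exact mul_le_mul_of_nonneg_left (Real.log_le_log hpos (hμc i)) (hμ0 i)
          _ = Real.log c := by rw [← Finset.sum_mul, hμsum, one_mul]
end

section
/- Let τ : S_n(ℂ) → S_m(ℂ) be a quantum channel. Then the minimum output entropy satisfies H(τ) ≥ −log σ_1(τ). -/
open scoped ComplexOrder
open Matrix Kronecker

section auxiliary

attribute [local instance] Matrix.frobeniusSeminormedAddCommGroup
  Matrix.frobeniusNormedAddCommGroup

lemma frobNorm_eq_norm {n m : Type*} [Fintype n] [Fintype m] (X : Matrix n m ℂ) :
    frobNorm X = ‖X‖ := by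
  have h : (X * Xᴴ).trace.re = ∑ i, ∑ j, ‖X i j‖ ^ 2 := by
    simp [Matrix.trace, Matrix.mul_apply, Matrix.diag, Complex.mul_conj',
      Complex.re_sum, Matrix.conjTranspose_apply, ← Complex.ofReal_pow]
  rw [frobNorm, h, Matrix.frobenius_norm_def, Real.sqrt_eq_rpow]
  norm_num [Real.rpow_natCast]

lemma frobNorm_nonneg {n m : Type*} [Fintype n] [Fintype m] (X : Matrix n m ℂ) :
    0 ≤ frobNorm X := Real.sqrt_nonneg _

lemma sandwich_sq {R : Type*} [Ring R] (u d s : R) (h : s * u = 1) :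
    (u * d * s) * (u * d * s) = u * (d * d) * s := by
  calc (u * d * s) * (u * d * s) = u * (d * ((s * u) * (d * s))) := by
        simp only [mul_assoc]
    _ = u * (d * d) * s := by rw [h, one_mul]; simp only [mul_assoc]

variable {k : Type*} [Fintype k] [DecidableEq k]

lemma star_mul_self_eigU {Y : Matrix k k ℂ} (hY : Y.IsHermitian) :
    (star (hY.eigenvectorUnitary : Matrix k k ℂ)) * (hY.eigenvectorUnitary : Matrix k k ℂ) = 1 :=
  Matrix.mem_unitaryGroup_iff'.mp hY.eigenvectorUnitary.2

lemma trace_eq_sum_eigs_s4 {Y : Matrix k k ℂ} (hY : Y.IsHermitian) :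
    Y.trace = ∑ i, (hY.eigenvalues i : ℂ) := by
  conv_lhs => rw [hY.spectral_theorem, Unitary.conjStarAlgAut_apply]
  rw [Matrix.trace_mul_cycle, star_mul_self_eigU hY]
  simp [Matrix.trace_diagonal]

lemma trace_sq_eq_sum_sq {Y : Matrix k k ℂ} (hY : Y.IsHermitian) :
    (Y * Y).trace = ∑ i, ((hY.eigenvalues i : ℂ)) ^ 2 := by
  conv_lhs => rw [hY.spectral_theorem, Unitary.conjStarAlgAut_apply]
  rw [sandwich_sq _ _ _ (star_mul_self_eigU hY),
    Matrix.trace_mul_cycle, star_mul_self_eigU hY]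
  simp [Matrix.diagonal_mul_diagonal, Matrix.trace_diagonal, sq]

lemma frobNorm_herm {Y : Matrix k k ℂ} (hY : Y.IsHermitian) :
    frobNorm Y = Real.sqrt (∑ i, (hY.eigenvalues i) ^ 2) := by
  rw [frobNorm, hY.eq, trace_sq_eq_sum_sq hY]
  congr 1
  simp [Complex.re_sum, ← Complex.ofReal_pow]

/-- For a PSD matrix with trace 1, the eigenvalues are nonnegative and sum to 1. -/
lemma sum_eigs_eq_one {Y : Matrix k k ℂ} (hY : Y.PosSemidef) (htr : Y.trace = 1) :
    ∑ i, hY.isHermitian.eigenvalues i = 1 := by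
  have := trace_eq_sum_eigs_s4 hY.isHermitian
  rw [htr] at this
  have : ((∑ i, hY.isHermitian.eigenvalues i : ℝ) : ℂ) = ((1 : ℝ) : ℂ) := by
    push_cast
    rw [← this]
  exact_mod_cast this

/-- A density matrix has Frobenius norm at most 1. -/
lemma frobNorm_density_le_one {Y : Matrix k k ℂ} (hY : Y.PosSemidef) (htr : Y.trace = 1) :
    frobNorm Y ≤ 1 := by
  rw [frobNorm_herm hY.isHermitian]
  rw [show (1 : ℝ) = Real.sqrt 1 from (Real.sqrt_one).symm]
  apply Real.sqrt_le_sqrt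
  calc ∑ i, (hY.isHermitian.eigenvalues i) ^ 2
      ≤ (∑ i, hY.isHermitian.eigenvalues i) ^ 2 :=
        Finset.sum_sq_le_sq_sum_of_nonneg fun i _ => hY.eigenvalues_nonneg i
    _ = 1 := by rw [sum_eigs_eq_one hY htr]; norm_num

/-- A density matrix has positive Frobenius norm. -/
lemma frobNorm_density_pos {Y : Matrix k k ℂ} (hY : Y.PosSemidef) (htr : Y.trace = 1) :
    0 < frobNorm Y := by
  obtain ⟨i, hi⟩ : ∃ i, hY.isHermitian.eigenvalues i ≠ 0 := by
    by_contra hall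
    push_neg at hall
    have := sum_eigs_eq_one hY htr
    simp [hall] at this
  rw [frobNorm_herm hY.isHermitian]
  apply Real.sqrt_pos.mpr
  exact Finset.sum_pos' (fun j _ => sq_nonneg _)
    ⟨i, Finset.mem_univ i, by positivity⟩

/-- Eigenvalue is at most the Frobenius norm for PSD matrices. -/
lemma eig_le_frobNorm {Y : Matrix k k ℂ} (hY : Y.PosSemidef) (i : k) :
    hY.isHermitian.eigenvalues i ≤ frobNorm Y := by
  rw [frobNorm_herm hY.isHermitian]
  have h1 : (hY.isHermitian.eigenvalues i) ^ 2 ≤ ∑ j, (hY.isHermitian.eigenvalues j) ^ 2 :=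
    Finset.single_le_sum (f := fun j => (hY.isHermitian.eigenvalues j) ^ 2)
      (fun j _ => sq_nonneg _) (Finset.mem_univ i)
  calc hY.isHermitian.eigenvalues i
      = Real.sqrt ((hY.isHermitian.eigenvalues i) ^ 2) :=
        (Real.sqrt_sq (hY.eigenvalues_nonneg i)).symm
    _ ≤ _ := Real.sqrt_le_sqrt h1

/-- Entropy lower bound: for a density matrix `Y`, `H(Y) ≥ -log ‖Y‖_F`. -/
lemma entropy_ge {Y : Matrix k k ℂ} (hY : Y.PosSemidef) (htr : Y.trace = 1) :
    -Real.log (frobNorm Y) ≤ entropy Y := by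
  rw [entropy, dif_pos hY.isHermitian]
  rw [neg_le_neg_iff]
  calc ∑ i, hY.isHermitian.eigenvalues i * Real.log (hY.isHermitian.eigenvalues i)
      ≤ ∑ i, hY.isHermitian.eigenvalues i * Real.log (frobNorm Y) := by
        apply Finset.sum_le_sum
        intro i _
        rcases eq_or_lt_of_le (hY.eigenvalues_nonneg i) with h0 | h0
        · rw [← h0]; simp
        · exact mul_le_mul_of_nonneg_left
            (Real.log_le_log h0 (eig_le_frobNorm hY i)) (le_of_lt h0)
    _ = Real.log (frobNorm Y) := by
        rw [← Finset.sum_mul, sum_eigs_eq_one hY htr, one_mul]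

lemma channel_bddAbove {a b : Type*} [Fintype a] [Fintype b] {l : ℕ}
    (A : Fin l → Matrix b a ℂ) :
    BddAbove {c : ℝ | ∃ X : Matrix a a ℂ, X.IsHermitian ∧ frobNorm X ≤ 1 ∧
      c = frobNorm (∑ i, A i * X * (A i)ᴴ)} := by
  refine ⟨∑ i, frobNorm (A i) * frobNorm (A i), ?_⟩
  rintro c ⟨X, -, hX1, rfl⟩
  calc frobNorm (∑ i, A i * X * (A i)ᴴ) = ‖∑ i, A i * X * (A i)ᴴ‖ := by rw [frobNorm_eq_norm]
    _ ≤ ∑ i, ‖A i * X * (A i)ᴴ‖ := norm_sum_le _ _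
    _ ≤ ∑ i, frobNorm (A i) * frobNorm (A i) := by
        apply Finset.sum_le_sum
        intro i _
        calc ‖A i * X * (A i)ᴴ‖ ≤ ‖A i * X‖ * ‖(A i)ᴴ‖ := Matrix.frobenius_norm_mul _ _
          _ ≤ (‖A i‖ * ‖X‖) * ‖(A i)ᴴ‖ := by
              apply mul_le_mul_of_nonneg_right (Matrix.frobenius_norm_mul _ _)
                (norm_nonneg _)
          _ ≤ (‖A i‖ * 1) * ‖A i‖ := by
              rw [Matrix.frobenius_norm_conjTranspose]
              apply mul_le_mul_of_nonneg_right _ (norm_nonneg _)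
              apply mul_le_mul_of_nonneg_left _ (norm_nonneg _)
              rw [← frobNorm_eq_norm]; exact hX1
          _ = frobNorm (A i) * frobNorm (A i) := by
              rw [mul_one, frobNorm_eq_norm]

end auxiliary

/-- For a quantum channel τ, the minimum output entropy satisfies
H(τ) ≥ -log σ₁(τ). -/
theorem stmt_4 {n m l : ℕ} (A : Fin l → Matrix (Fin m) (Fin n) ℂ)
    (hA : ∑ i, (A i)ᴴ * A i = 1) :
    -Real.log (opNorm (fun (X : Matrix (Fin n) (Fin n) ℂ) => ∑ i, A i * X * (A i)ᴴ)) ≤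
      minEntropy (fun (X : Matrix (Fin n) (Fin n) ℂ) => ∑ i, A i * X * (A i)ᴴ) := by
  classical
  set τ : Matrix (Fin n) (Fin n) ℂ → Matrix (Fin m) (Fin m) ℂ :=
    fun X => ∑ i, A i * X * (A i)ᴴ with hτ
  -- basic facts about the channel
  have hPSD : ∀ X : Matrix (Fin n) (Fin n) ℂ, X.PosSemidef → (τ X).PosSemidef := by
    intro X hX
    apply Finset.sum_induction (fun i => A i * X * (A i)ᴴ) (fun M => M.PosSemidef)
      (fun a b ha hb => ha.add hb) Matrix.PosSemidef.zero
    intro i _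
    exact hX.mul_mul_conjTranspose_same (A i)
  have htr : ∀ X : Matrix (Fin n) (Fin n) ℂ, X.trace = 1 → (τ X).trace = 1 := by
    intro X hX
    have : (τ X).trace = ((∑ i, (A i)ᴴ * A i) * X).trace := by
      rw [hτ, Matrix.trace_sum, Finset.sum_mul, Matrix.trace_sum]
      congr 1
      ext i
      rw [Matrix.trace_mul_cycle]
    rw [this, hA, Matrix.one_mul, hX]
  rcases Nat.eq_zero_or_pos n with hn | hn
  · -- degenerate case : no density matrices, minEntropy = sInf ∅ = 0
    subst hn
    have hempty : {h : ℝ | ∃ X : Matrix (Fin 0) (Fin 0) ℂ, X.PosSemidef ∧ X.trace = 1 ∧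
        h = entropy (τ X)} = ∅ := by
      ext h
      simp only [Set.mem_setOf_eq, Set.mem_empty_iff_false, iff_false]
      rintro ⟨X, -, hX1, -⟩
      rw [Matrix.trace] at hX1
      simp at hX1
    rw [minEntropy, hempty, Real.sInf_empty]
    have hset : {c : ℝ | ∃ X : Matrix (Fin 0) (Fin 0) ℂ, X.IsHermitian ∧ frobNorm X ≤ 1 ∧
        c = frobNorm (τ X)} = {0} := by
      ext c
      simp only [Set.mem_setOf_eq, Set.mem_singleton_iff]
      constructor
      · rintro ⟨X, -, -, rfl⟩
        have : X = 0 := Subsingleton.elim X 0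
        subst this
        simp [hτ, frobNorm]
      · rintro rfl
        refine ⟨0, ?_, ?_, ?_⟩
        · simp [Matrix.IsHermitian]
        · simp [frobNorm]
        · simp [hτ, frobNorm]
    rw [opNorm, hset, csSup_singleton, Real.log_zero, neg_zero]
  · -- main case
    -- nonemptiness of the density set
    haveI : NeZero n := ⟨Nat.pos_iff_ne_zero.mp hn⟩
    set X₀ : Matrix (Fin n) (Fin n) ℂ := Matrix.diagonal (Pi.single (0 : Fin n) (1 : ℂ)) with hX₀
    have hX₀psd : X₀.PosSemidef := by
      apply Matrix.PosSemidef.diagonal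
      intro i
      by_cases h : i = 0 <;> simp [h, Pi.single_apply]
    have hX₀tr : X₀.trace = 1 := by
      rw [hX₀, Matrix.trace_diagonal]
      simp
    -- boundedness of the opNorm set
    have hbdd : BddAbove {c : ℝ | ∃ X : Matrix (Fin n) (Fin n) ℂ, X.IsHermitian ∧
        frobNorm X ≤ 1 ∧ c = frobNorm (τ X)} := channel_bddAbove A
    -- the core bound, for each density matrix X
    rw [minEntropy]
    refine le_csInf ⟨entropy (τ X₀), X₀, hX₀psd, hX₀tr, rfl⟩ ?_
    rintro h ⟨X, hXpsd, hXtr, rfl⟩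
    have hτpsd := hPSD X hXpsd
    have hτtr := htr X hXtr
    have hmem : frobNorm (τ X) ∈ {c : ℝ | ∃ X : Matrix (Fin n) (Fin n) ℂ, X.IsHermitian ∧
        frobNorm X ≤ 1 ∧ c = frobNorm (τ X)} :=
      ⟨X, hXpsd.isHermitian, frobNorm_density_le_one hXpsd hXtr, rfl⟩
    have hle : frobNorm (τ X) ≤ opNorm τ := le_csSup hbdd hmem
    have hpos : 0 < frobNorm (τ X) := frobNorm_density_pos hτpsd hτtr
    calc -Real.log (opNorm τ) ≤ -Real.log (frobNorm (τ X)) := by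
          apply neg_le_neg
          exact Real.log_le_log hpos hle
      _ ≤ entropy (τ X) := entropy_ge hτpsd hτtr
end

section
/- Let τ : S_n(ℂ) → S_m(ℂ) be a quantum channel with Kraus operators A_1,…,A_l and A(τ) := ∑_{i=1}^l A_i A_i^*. Then for every integer p ≥ 1, the minimum output entropy of the p-fold tensor power satisfies H(⊗^p τ) ≥ −p · log λ_1(A(τ)). -/
open scoped ComplexOrder
open Matrix Kronecker

/-- The p-fold Kronecker product A_{i 1} ⊗ ⋯ ⊗ A_{i p} of Kraus operators,
realized as a matrix indexed by p-tuples. -/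
noncomputable def kronPow {l m n : ℕ} (p : ℕ) (A : Fin l → Matrix (Fin m) (Fin n) ℂ)
    (i : Fin p → Fin l) : Matrix (Fin p → Fin m) (Fin p → Fin n) ℂ :=
  Matrix.of fun r c => ∏ j, A (i j) (r j) (c j)

section Aux

open Matrix

variable {ι : Type*} [Fintype ι] [DecidableEq ι]

/-- Spectral decomposition of `t • 1 - M`. -/
lemma aux_spectral_sub {M : Matrix ι ι ℂ} (hM : M.IsHermitian) (t : ℝ) :
    (t : ℂ) • (1 : Matrix ι ι ℂ) - M =
      (hM.eigenvectorUnitary : Matrix ι ι ℂ) *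
        Matrix.diagonal (fun i => ((t - hM.eigenvalues i : ℝ) : ℂ)) *
        (star (hM.eigenvectorUnitary : Matrix ι ι ℂ)) := by
  have hU : (hM.eigenvectorUnitary : Matrix ι ι ℂ) *
      (star (hM.eigenvectorUnitary : Matrix ι ι ℂ)) = 1 :=
    Matrix.mem_unitaryGroup_iff.mp hM.eigenvectorUnitary.2
  have hD : Matrix.diagonal (fun i => ((t - hM.eigenvalues i : ℝ) : ℂ))
      = (t : ℂ) • (1 : Matrix ι ι ℂ)
        - Matrix.diagonal (RCLike.ofReal ∘ hM.eigenvalues) := by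
    ext i j
    by_cases h : i = j
    · subst h
      simp only [Matrix.diagonal_apply_eq, Matrix.sub_apply, Matrix.smul_apply,
        Matrix.one_apply_eq, Function.comp_apply, smul_eq_mul, mul_one]
      push_cast
      rfl
    · simp [Matrix.diagonal_apply_ne _ h, Matrix.one_apply_ne h]
  rw [hD, Matrix.mul_sub, Matrix.sub_mul, ← (hM.spectral_theorem.trans (Unitary.conjStarAlgAut_apply _ _))]
  congr 1
  rw [mul_smul_comm, mul_one, smul_mul_assoc, hU]

lemma aux_psd_of_eig_le {M : Matrix ι ι ℂ} (hM : M.IsHermitian)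
    {t : ℝ} (h : ∀ i, hM.eigenvalues i ≤ t) :
    ((t : ℂ) • 1 - M).PosSemidef := by
  rw [aux_spectral_sub hM t, Matrix.star_eq_conjTranspose]
  refine (Matrix.posSemidef_diagonal_iff.mpr fun i => ?_).mul_mul_conjTranspose_same _
  rw [Complex.zero_le_real]
  exact sub_nonneg.mpr (h i)

lemma aux_eig_le_of_psd {M : Matrix ι ι ℂ} (hM : M.IsHermitian)
    {t : ℝ} (h : ((t : ℂ) • 1 - M).PosSemidef) : ∀ i, hM.eigenvalues i ≤ t := by
  intro i
  set U : Matrix ι ι ℂ := (hM.eigenvectorUnitary : Matrix ι ι ℂ) with hUdef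
  have hU1 : star U * U = 1 := Matrix.mem_unitaryGroup_iff'.mp hM.eigenvectorUnitary.2
  have h2 := h.conjTranspose_mul_mul_same U
  rw [aux_spectral_sub hM t, ← Matrix.star_eq_conjTranspose] at h2
  have h3 : star U * (U * Matrix.diagonal (fun i => ((t - hM.eigenvalues i : ℝ) : ℂ)) * star U) * U
      = Matrix.diagonal (fun i => ((t - hM.eigenvalues i : ℝ) : ℂ)) := by
    rw [← Matrix.mul_assoc, ← Matrix.mul_assoc, hU1, Matrix.one_mul, Matrix.mul_assoc, hU1,
      Matrix.mul_one]
  rw [h3] at h2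
  have h4 := Matrix.posSemidef_diagonal_iff.mp h2 i
  rw [Complex.zero_le_real] at h4
  linarith

lemma aux_trace_eq_sum_eigen {M : Matrix ι ι ℂ} (hM : M.IsHermitian) :
    M.trace = ∑ i, (hM.eigenvalues i : ℂ) := by
  have hU1 : star (hM.eigenvectorUnitary : Matrix ι ι ℂ) *
      (hM.eigenvectorUnitary : Matrix ι ι ℂ) = 1 :=
    Matrix.mem_unitaryGroup_iff'.mp hM.eigenvectorUnitary.2
  conv_lhs => rw [hM.spectral_theorem]
  rw [Unitary.conjStarAlgAut_apply, Matrix.trace_mul_cycle, hU1, Matrix.one_mul, Matrix.trace_diagonal]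
  rfl

lemma aux_psd_sum {κ : Type*} (s : Finset κ)
    (f : κ → Matrix ι ι ℂ) (h : ∀ i ∈ s, (f i).PosSemidef) :
    (∑ i ∈ s, f i).PosSemidef :=
  Finset.sum_induction f _ (fun _ _ ha hb => ha.add hb) Matrix.PosSemidef.zero h

lemma aux_smul_one_psd {t : ℝ} (ht : 0 ≤ t) :
    ((t : ℂ) • (1 : Matrix ι ι ℂ)).PosSemidef := by
  rw [Matrix.smul_one_eq_diagonal]
  exact Matrix.posSemidef_diagonal_iff.mpr fun i => Complex.zero_le_real.mpr ht

lemma aux_kron_psd {a b : Type*} [Fintype a] [Fintype b] [DecidableEq a] [DecidableEq b]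
    {M : Matrix a a ℂ} {N : Matrix b b ℂ} (hM : M.PosSemidef) (hN : N.PosSemidef) :
    (M ⊗ₖ N).PosSemidef := by
  exact hM.kronecker hN

/-- the `p`-fold "Kronecker power" of a single matrix, on tuple indices. -/
noncomputable def piKron {m : ℕ} (p : ℕ) (M : Matrix (Fin m) (Fin m) ℂ) :
    Matrix (Fin p → Fin m) (Fin p → Fin m) ℂ :=
  Matrix.of fun r c => ∏ j, M (r j) (c j)

lemma piKron_zero {m : ℕ} (M : Matrix (Fin m) (Fin m) ℂ) :
    piKron 0 M = 1 := by
  ext r c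
  simp [piKron, Matrix.one_apply, Subsingleton.elim r c]

lemma piKron_succ {m p : ℕ} (M : Matrix (Fin m) (Fin m) ℂ) :
    piKron (p + 1) M = (M ⊗ₖ piKron p M).submatrix
      (fun r : Fin (p + 1) → Fin m => (r 0, fun j : Fin p => r j.succ))
      (fun c : Fin (p + 1) → Fin m => (c 0, fun j : Fin p => c j.succ)) := by
  ext r c
  simp [piKron, Fin.prod_univ_succ]

lemma piKron_one {m : ℕ} (p : ℕ) : piKron p (1 : Matrix (Fin m) (Fin m) ℂ) = 1 := by
  ext r c
  simp only [piKron, Matrix.of_apply, Matrix.one_apply]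
  by_cases h : r = c
  · subst h; simp
  · rw [if_neg h]
    obtain ⟨j, hj⟩ : ∃ j, r j ≠ c j := by
      by_contra hc
      push_neg at hc
      exact h (funext hc)
    refine Finset.prod_eq_zero (Finset.mem_univ j) ?_
    rw [if_neg hj]

lemma piKron_psd {m : ℕ} {M : Matrix (Fin m) (Fin m) ℂ} (hM : M.PosSemidef) :
    ∀ p, (piKron p M).PosSemidef
  | 0 => by rw [piKron_zero]; exact Matrix.PosSemidef.one
  | (p + 1) => by
      rw [piKron_succ]
      exact (aux_kron_psd hM (piKron_psd hM p)).submatrix _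

lemma aux_one_apply_succ {m p : ℕ} (r c : Fin (p + 1) → Fin m) :
    (1 : Matrix (Fin (p + 1) → Fin m) (Fin (p + 1) → Fin m) ℂ) r c
      = (1 : Matrix (Fin m) (Fin m) ℂ) (r 0) (c 0)
        * (1 : Matrix (Fin p → Fin m) (Fin p → Fin m) ℂ)
            (fun j : Fin p => r j.succ) (fun j : Fin p => c j.succ) := by
  have hiff : r = c ↔ (r 0 = c 0 ∧ (fun j : Fin p => r j.succ) = fun j : Fin p => c j.succ) := by
    constructor
    · rintro rfl; exact ⟨rfl, rfl⟩
    · rintro ⟨h0, hs⟩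
      funext j
      refine Fin.cases h0 (fun k => ?_) j
      exact congrFun hs k
  simp only [Matrix.one_apply, hiff]
  by_cases h0 : r 0 = c 0 <;>
    by_cases hs : (fun j : Fin p => r j.succ) = (fun j : Fin p => c j.succ) <;>
      simp [h0, hs]

lemma piKron_bound {m : ℕ} {M : Matrix (Fin m) (Fin m) ℂ} (hM : M.PosSemidef)
    {t : ℝ} (ht : 0 ≤ t) (hle : ((t : ℂ) • 1 - M).PosSemidef) :
    ∀ p, (((t ^ p : ℝ) : ℂ) • 1 - piKron p M).PosSemidef
  | 0 => by
      rw [piKron_zero]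
      simpa using Matrix.PosSemidef.zero
  | (p + 1) => by
      have ih := piKron_bound hM ht hle p
      have h1 : (((t ^ p : ℝ) : ℂ) • (1 : Matrix (Fin p → Fin m) (Fin p → Fin m) ℂ)).PosSemidef :=
        aux_smul_one_psd (pow_nonneg ht p)
      have hsum := (((aux_kron_psd hle h1).add (aux_kron_psd hM ih)).submatrix
        (fun r : Fin (p + 1) → Fin m => (r 0, fun j : Fin p => r j.succ)))
      have heq : ((t ^ (p + 1) : ℝ) : ℂ) • (1 : Matrix (Fin (p + 1) → Fin m) _ ℂ)
            - piKron (p + 1) M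
          = ((((t : ℂ) • 1 - M) ⊗ₖ (((t ^ p : ℝ) : ℂ) • 1)
              + M ⊗ₖ ((((t ^ p : ℝ) : ℂ) • 1) - piKron p M)).submatrix
              (fun r : Fin (p + 1) → Fin m => (r 0, fun j : Fin p => r j.succ))
              (fun r : Fin (p + 1) → Fin m => (r 0, fun j : Fin p => r j.succ))) := by
        ext r c
        simp only [Matrix.sub_apply, Matrix.smul_apply, Matrix.add_apply, Matrix.submatrix_apply,
          Matrix.kroneckerMap_apply, piKron, Matrix.of_apply, smul_eq_mul]
        rw [aux_one_apply_succ, Fin.prod_univ_succ]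
        push_cast
        ring
      rw [heq]
      exact hsum

set_option maxHeartbeats 1000000 in
lemma aux_sum_prod {p a b : ℕ} (f : Fin p → Fin a → Fin b → ℂ) :
    ∑ i : Fin p → Fin a, ∑ s : Fin p → Fin b, ∏ j, f j (i j) (s j)
      = ∏ j, ∑ x : Fin a × Fin b, f j x.1 x.2 := by
  calc ∑ i : Fin p → Fin a, ∑ s : Fin p → Fin b, ∏ j, f j (i j) (s j)
      = ∑ x : (Fin p → Fin a) × (Fin p → Fin b), ∏ j, f j (x.1 j) (x.2 j) := by
        rw [← Fintype.sum_prod_type']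
    _ = ∑ g : Fin p → Fin a × Fin b, ∏ j, f j (g j).1 (g j).2 :=
        (Fintype.sum_equiv (Equiv.arrowProdEquivProdArrow (Fin p) (fun _ => Fin a) (fun _ => Fin b))
          (fun g => ∏ j, f j (g j).1 (g j).2)
          (fun x => ∏ j, f j (x.1 j) (x.2 j)) (fun g => rfl)).symm
    _ = ∏ j, ∑ x : Fin a × Fin b, f j x.1 x.2 := by
        rw [Fintype.prod_sum]

lemma aux_sum_conjT_mul {n m l : ℕ} (A : Fin l → Matrix (Fin m) (Fin n) ℂ) (p : ℕ) :
    ∑ i : Fin p → Fin l, (kronPow p A i)ᴴ * kronPow p A i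
      = piKron p (∑ a, (A a)ᴴ * A a) := by
  ext r c
  simp only [Matrix.sum_apply, Matrix.mul_apply, Matrix.conjTranspose_apply, kronPow,
    Matrix.of_apply, piKron]
  have hterm : ∀ (i : Fin p → Fin l) (s : Fin p → Fin m),
      star (∏ j, A (i j) (s j) (r j)) * ∏ j, A (i j) (s j) (c j)
        = ∏ j, star (A (i j) (s j) (r j)) * A (i j) (s j) (c j) := by
    intro i s
    rw [star_prod, ← Finset.prod_mul_distrib]
  simp only [hterm]
  rw [aux_sum_prod (fun j a b => star (A a b (r j)) * A a b (c j))]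
  refine Finset.prod_congr rfl fun j _ => ?_
  rw [Fintype.sum_prod_type]

lemma aux_sum_mul_conjT {n m l : ℕ} (A : Fin l → Matrix (Fin m) (Fin n) ℂ) (p : ℕ) :
    ∑ i : Fin p → Fin l, kronPow p A i * (kronPow p A i)ᴴ
      = piKron p (∑ a, A a * (A a)ᴴ) := by
  ext r c
  simp only [Matrix.sum_apply, Matrix.mul_apply, Matrix.conjTranspose_apply, kronPow,
    Matrix.of_apply, piKron]
  have hterm : ∀ (i : Fin p → Fin l) (s : Fin p → Fin n),
      (∏ j, A (i j) (r j) (s j)) * star (∏ j, A (i j) (c j) (s j))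
        = ∏ j, A (i j) (r j) (s j) * star (A (i j) (c j) (s j)) := by
    intro i s
    rw [star_prod, Finset.prod_mul_distrib]
  simp only [hterm]
  rw [aux_sum_prod (fun j a b => A a (r j) b * star (A a (c j) b))]
  refine Finset.prod_congr rfl fun j _ => ?_
  rw [Fintype.sum_prod_type]

lemma aux_entropy_ge {Y : Matrix ι ι ℂ} (hY : Y.PosSemidef)
    (htr : Y.trace = 1) {t : ℝ} (ht : ∀ i, hY.1.eigenvalues i ≤ t) :
    -Real.log t ≤ entropy Y := by
  have hsum : ∑ i, hY.1.eigenvalues i = 1 := by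
    have h1 := aux_trace_eq_sum_eigen hY.1
    rw [htr] at h1
    exact_mod_cast h1.symm
  have hE : entropy Y = -∑ i, hY.1.eigenvalues i * Real.log (hY.1.eigenvalues i) := by
    simp only [entropy]
    rw [dif_pos hY.1]
  rw [hE]
  have hterm : ∀ i, hY.1.eigenvalues i * Real.log (hY.1.eigenvalues i)
      ≤ hY.1.eigenvalues i * Real.log t := by
    intro i
    rcases eq_or_lt_of_le (hY.eigenvalues_nonneg i) with h0 | h0
    · rw [← h0]; simp
    · exact mul_le_mul_of_nonneg_left (Real.log_le_log h0 (ht i)) (le_of_lt h0)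
  calc -Real.log t = -(∑ i, hY.1.eigenvalues i * Real.log t) := by
        rw [← Finset.sum_mul, hsum, one_mul]
    _ ≤ -∑ i, hY.1.eigenvalues i * Real.log (hY.1.eigenvalues i) :=
        neg_le_neg (Finset.sum_le_sum fun i _ => hterm i)

end Aux


/-- For a quantum channel τ with Kraus operators A₁,…,A_l and
A(τ) = ∑ᵢ Aᵢ Aᵢ*, for every p ≥ 1 the minimum output entropy of the p-fold tensor
power channel ⊗ᵖτ (whose Kraus operators are all p-fold Kronecker products of the Aᵢ)
satisfies H(⊗ᵖτ) ≥ -p log λ₁(A(τ)). -/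
theorem stmt_5 {n m l : ℕ} (A : Fin l → Matrix (Fin m) (Fin n) ℂ)
    (hA : ∑ i, (A i)ᴴ * A i = 1) (p : ℕ) (hp : 1 ≤ p) :
    -(p : ℝ) * Real.log (lambdaMax (∑ i, A i * (A i)ᴴ)) ≤
      minEntropy (fun X : Matrix (Fin p → Fin n) (Fin p → Fin n) ℂ =>
        ∑ i : Fin p → Fin l, kronPow p A i * X * (kronPow p A i)ᴴ) := by
  classical
  set M : Matrix (Fin m) (Fin m) ℂ := ∑ i, A i * (A i)ᴴ with hMdef
  have hMpsd : M.PosSemidef :=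
    aux_psd_sum _ _ fun i _ => Matrix.posSemidef_self_mul_conjTranspose _
  have hMher : M.IsHermitian := hMpsd.1
  have hlam : lambdaMax M = ⨆ i, hMher.eigenvalues i := by
    simp only [lambdaMax]
    rw [dif_pos hMher]
  have hlam0 : 0 ≤ lambdaMax M := by
    rw [hlam]
    exact Real.iSup_nonneg fun i => hMpsd.eigenvalues_nonneg i
  have hMle : ((lambdaMax M : ℂ) • 1 - M).PosSemidef := by
    refine aux_psd_of_eig_le hMher fun i => ?_
    rw [hlam]
    exact le_ciSup (Set.finite_range _).bddAbove i
  simp only [minEntropy]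
  by_cases hS : Set.Nonempty {h : ℝ | ∃ X : Matrix (Fin p → Fin n) (Fin p → Fin n) ℂ,
      X.PosSemidef ∧ X.trace = 1 ∧
        h = entropy (∑ i : Fin p → Fin l, kronPow p A i * X * (kronPow p A i)ᴴ)}
  · refine le_csInf hS ?_
    rintro h ⟨X, hXpsd, hXtr, rfl⟩
    set Y : Matrix (Fin p → Fin m) (Fin p → Fin m) ℂ :=
      ∑ i : Fin p → Fin l, kronPow p A i * X * (kronPow p A i)ᴴ with hYdef
    have hYpsd : Y.PosSemidef :=
      aux_psd_sum _ _ fun i _ => hXpsd.mul_mul_conjTranspose_same _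
    have hBB : ∑ i : Fin p → Fin l, (kronPow p A i)ᴴ * kronPow p A i = 1 := by
      rw [aux_sum_conjT_mul, hA, piKron_one]
    have hYtr : Y.trace = 1 := by
      have h1 : Y.trace = ((∑ i : Fin p → Fin l, (kronPow p A i)ᴴ * kronPow p A i) * X).trace := by
        rw [hYdef, Matrix.trace_sum, Finset.sum_mul, Matrix.trace_sum]
        exact Finset.sum_congr rfl fun i _ => Matrix.trace_mul_cycle _ _ _
      rw [h1, hBB, Matrix.one_mul, hXtr]
    have hXsum : ∑ i, hXpsd.1.eigenvalues i = 1 := by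
      have h1 := aux_trace_eq_sum_eigen hXpsd.1
      rw [hXtr] at h1
      exact_mod_cast h1.symm
    have hXle1 : ∀ i, hXpsd.1.eigenvalues i ≤ 1 := by
      intro i
      rw [← hXsum]
      exact Finset.single_le_sum (fun j _ => hXpsd.eigenvalues_nonneg j) (Finset.mem_univ i)
    have hIX : ((1 : Matrix (Fin p → Fin n) (Fin p → Fin n) ℂ) - X).PosSemidef := by
      have h2 := aux_psd_of_eig_le hXpsd.1 hXle1
      simpa using h2
    have hNle : (((lambdaMax M ^ p : ℝ) : ℂ) • 1 - piKron p M).PosSemidef :=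
      piKron_bound hMpsd hlam0 hMle p
    have hNY : (piKron p M - Y).PosSemidef := by
      have heq : piKron p M - Y
          = ∑ i : Fin p → Fin l, kronPow p A i * (1 - X) * (kronPow p A i)ᴴ := by
        rw [hMdef, ← aux_sum_mul_conjT A p, hYdef, ← Finset.sum_sub_distrib]
        refine Finset.sum_congr rfl fun i _ => ?_
        rw [Matrix.mul_sub, Matrix.sub_mul, Matrix.mul_one]
      rw [heq]
      exact aux_psd_sum _ _ fun i _ => hIX.mul_mul_conjTranspose_same _
    have hYle : (((lambdaMax M ^ p : ℝ) : ℂ) • 1 - Y).PosSemidef := by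
      have heq : ((lambdaMax M ^ p : ℝ) : ℂ) • (1 : Matrix (Fin p → Fin m) (Fin p → Fin m) ℂ) - Y
          = (((lambdaMax M ^ p : ℝ) : ℂ) • 1 - piKron p M) + (piKron p M - Y) := by
        rw [sub_add_sub_cancel]
      rw [heq]
      exact hNle.add hNY
    have hYeig : ∀ i, hYpsd.1.eigenvalues i ≤ lambdaMax M ^ p :=
      aux_eig_le_of_psd hYpsd.1 hYle
    have hfinal := aux_entropy_ge hYpsd hYtr hYeig
    rw [Real.log_pow] at hfinal
    calc -(p : ℝ) * Real.log (lambdaMax M) = -((p : ℝ) * Real.log (lambdaMax M)) := by ring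
      _ ≤ entropy Y := hfinal
  · rw [Set.not_nonempty_iff_eq_empty.mp hS, Real.sInf_empty]
    have hn : n = 0 := by
      by_contra hn0
      refine hS ⟨_, ((((n : ℝ) ^ p)⁻¹ : ℝ) : ℂ) • 1,
        aux_smul_one_psd (by positivity), ?_, rfl⟩
      rw [Matrix.trace_smul, Matrix.trace_one, smul_eq_mul]
      have hcard : (Fintype.card (Fin p → Fin n) : ℂ) = ((n : ℂ)) ^ p := by
        simp [Fintype.card_fun]
      have hne : ((n : ℂ)) ^ p ≠ 0 := pow_ne_zero _ (Nat.cast_ne_zero.mpr hn0)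
      rw [hcard]
      push_cast
      exact inv_mul_cancel₀ hne
    subst hn
    have hM0 : M = 0 := by
      ext a b
      simp [hMdef, Matrix.sum_apply, Matrix.mul_apply]
    have hzher : (0 : Matrix (Fin m) (Fin m) ℂ).IsHermitian := Matrix.isHermitian_zero
    have hzsum : ∑ i, hzher.eigenvalues i = 0 := by
      have h1 := aux_trace_eq_sum_eigen hzher
      rw [Matrix.trace_zero] at h1
      exact_mod_cast h1.symm
    have hzle : ∀ i, hzher.eigenvalues i ≤ 0 := by
      intro i
      have h2 := (Finset.sum_eq_zero_iff_of_nonneg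
        (fun j _ => Matrix.PosSemidef.zero.eigenvalues_nonneg j)).mp hzsum i (Finset.mem_univ i)
      exact le_of_eq h2
    have h0 : lambdaMax M = 0 := by
      rw [hM0]
      simp only [lambdaMax]
      rw [dif_pos hzher]
      exact le_antisymm (Real.iSup_le (fun i => hzle i) le_rfl)
        (Real.iSup_nonneg fun i => Matrix.PosSemidef.zero.eigenvalues_nonneg i)
    rw [h0, Real.log_zero, mul_zero]
end

section
/- Let τ : S_n(ℂ) → S_m(ℂ) be a quantum channel with Kraus operators A_1,…,A_l and A(τ) := ∑_{i=1}^l A_i A_i^*. Then λ_1(A(τ)) ≥ n/m and σ_1(τ) ≥ √(n/m). In particular, if m ≤ n then λ_1(A(τ)) ≥ 1 and σ_1(τ) ≥ 1. -/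
open scoped ComplexOrder
open Matrix Kronecker

lemma frob_re_eq {k l : Type*} [Fintype k] [Fintype l] (X : Matrix k l ℂ) :
    (X * Xᴴ).trace.re = ∑ i, ∑ j, Complex.normSq (X i j) := by
  simp [Matrix.trace, Matrix.diag, Matrix.mul_apply, Matrix.conjTranspose_apply,
    Complex.mul_conj, Complex.ofReal_sum]

lemma trace_eq_sum_eigs_s10 {m : ℕ} {B : Matrix (Fin m) (Fin m) ℂ} (hB : B.IsHermitian) :
    B.trace = ∑ i, (hB.eigenvalues i : ℂ) := by
  exact hB.trace_eq_sum_eigenvalues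

lemma entry_le_one {n : ℕ} (X : Matrix (Fin n) (Fin n) ℂ) (h : frobNorm X ≤ 1) (a b : Fin n) :
    ‖X a b‖ ≤ 1 := by
  have h0 : (0:ℝ) ≤ ∑ i, ∑ j, Complex.normSq (X i j) :=
    Finset.sum_nonneg fun _ _ => Finset.sum_nonneg fun _ _ => Complex.normSq_nonneg _
  have hs : ∑ i, ∑ j, Complex.normSq (X i j) ≤ 1 := by
    have := Real.mul_self_sqrt (by rw [frob_re_eq]; exact h0 : (0:ℝ) ≤ (X * Xᴴ).trace.re)
    unfold frobNorm at h
    nlinarith [Real.sqrt_nonneg ((X * Xᴴ).trace.re), frob_re_eq X]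
  have h1 : Complex.normSq (X a b) ≤ 1 := by
    refine le_trans ?_ hs
    refine le_trans ?_ (Finset.single_le_sum (f := fun i => ∑ j, Complex.normSq (X i j))
      (fun i _ => Finset.sum_nonneg fun _ _ => Complex.normSq_nonneg _) (Finset.mem_univ a))
    exact Finset.single_le_sum (fun j _ => Complex.normSq_nonneg _) (Finset.mem_univ b)
  nlinarith [norm_nonneg (X a b), Complex.sq_norm (X a b)]

/-- For a quantum channel τ : Sₙ(ℂ) → Sₘ(ℂ) with A(τ) = ∑ᵢ Aᵢ Aᵢ*,
one has λ₁(A(τ)) ≥ n/m and σ₁(τ) ≥ √(n/m); in particular, if m ≤ n then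
λ₁(A(τ)) ≥ 1 and σ₁(τ) ≥ 1. -/
theorem stmt_10 {n m l : ℕ} (hm : 0 < m) (A : Fin l → Matrix (Fin m) (Fin n) ℂ)
    (hA : ∑ i, (A i)ᴴ * A i = 1) :
    (n : ℝ) / m ≤ lambdaMax (∑ i, A i * (A i)ᴴ) ∧
    Real.sqrt ((n : ℝ) / m) ≤ opNorm (fun (X : Matrix (Fin n) (Fin n) ℂ) => ∑ i, A i * X * (A i)ᴴ) ∧
    (m ≤ n → 1 ≤ lambdaMax (∑ i, A i * (A i)ᴴ) ∧
      1 ≤ opNorm (fun (X : Matrix (Fin n) (Fin n) ℂ) => ∑ i, A i * X * (A i)ᴴ)) := by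
  have hmR : (0:ℝ) < m := by exact_mod_cast hm
  set B := ∑ i, A i * (A i)ᴴ with hBdef
  have hB : B.IsHermitian := by
    unfold Matrix.IsHermitian
    rw [hBdef, Matrix.conjTranspose_sum]
    exact Finset.sum_congr rfl fun i _ => by
      rw [Matrix.conjTranspose_mul, Matrix.conjTranspose_conjTranspose]
  have htrB : B.trace = (n : ℂ) := by
    have hcomm : ∀ i : Fin l, (A i * (A i)ᴴ).trace = ((A i)ᴴ * A i).trace :=
      fun i => Matrix.trace_mul_comm _ _
    rw [hBdef, Matrix.trace_sum]
    simp_rw [hcomm]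
    rw [← Matrix.trace_sum, hA, Matrix.trace_one]
    simp
  -- lambdaMax part
  have hne : Nonempty (Fin m) := Fin.pos_iff_nonempty.mp hm
  have hsum : ∑ i, hB.eigenvalues i = (n : ℝ) := by
    have h1 := (trace_eq_sum_eigs_s10 hB).symm.trans htrB
    exact_mod_cast h1
  have hlam : (n : ℝ) / m ≤ lambdaMax B := by
    rw [lambdaMax, dif_pos hB]
    obtain ⟨i, _, hi⟩ := Finset.exists_le_of_sum_le (f := fun _ : Fin m => (n:ℝ)/m)
      (g := hB.eigenvalues) Finset.univ_nonempty
      (le_of_eq (by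
        rw [hsum, Finset.sum_const, Finset.card_univ, Fintype.card_fin, nsmul_eq_mul,
          mul_comm, div_mul_cancel₀ _ (ne_of_gt hmR)]))
    exact le_trans hi (le_ciSup (Set.Finite.bddAbove (Set.finite_range _)) i)
  -- bounded above
  have hbdd : BddAbove {c : ℝ | ∃ X : Matrix (Fin n) (Fin n) ℂ, X.IsHermitian ∧
      frobNorm X ≤ 1 ∧ c = frobNorm (∑ i, A i * X * (A i)ᴴ)} := by
    set c : Fin m → Fin m → ℝ := fun i j => ∑ k, ∑ b, ∑ a, ‖A k i a‖ * ‖A k j b‖ with hc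
    refine ⟨Real.sqrt (∑ i, ∑ j, (c i j)^2), ?_⟩
    rintro x ⟨X, hX, hX1, rfl⟩
    have hent := entry_le_one X hX1
    have hnorm : ∀ i j, ‖(∑ k, A k * X * (A k)ᴴ) i j‖ ≤ c i j := by
      intro i j
      have he : (∑ k, A k * X * (A k)ᴴ) i j
          = ∑ k, ∑ b, ∑ a, A k i a * X a b * star (A k j b) := by
        simp [Matrix.sum_apply, Matrix.mul_apply, Matrix.conjTranspose_apply, Finset.sum_mul]
      rw [he]
      refine le_trans (norm_sum_le _ _) (Finset.sum_le_sum fun k _ => ?_)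
      refine le_trans (norm_sum_le _ _) (Finset.sum_le_sum fun b _ => ?_)
      refine le_trans (norm_sum_le _ _) (Finset.sum_le_sum fun a _ => ?_)
      rw [norm_mul, norm_mul, norm_star]
      calc ‖A k i a‖ * ‖X a b‖ * ‖A k j b‖ ≤ ‖A k i a‖ * 1 * ‖A k j b‖ := by
            gcongr; exact hent a b
        _ = ‖A k i a‖ * ‖A k j b‖ := by ring
    rw [frobNorm, frob_re_eq]
    refine Real.sqrt_le_sqrt (Finset.sum_le_sum fun i _ => Finset.sum_le_sum fun j _ => ?_)
    rw [← Complex.sq_norm]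
    exact pow_le_pow_left₀ (norm_nonneg _) (hnorm i j) 2
  -- element of the set
  have hop : Real.sqrt ((n:ℝ)/m) ≤ opNorm (fun (X : Matrix (Fin n) (Fin n) ℂ) => ∑ i, A i * X * (A i)ᴴ) := by
    rw [opNorm]
    rcases Nat.eq_zero_or_pos n with hn | hn
    · subst hn
      have h0 : (0:ℝ) ∈ {c : ℝ | ∃ X : Matrix (Fin 0) (Fin 0) ℂ, X.IsHermitian ∧
          frobNorm X ≤ 1 ∧ c = frobNorm (∑ i, A i * X * (A i)ᴴ)} := by
        refine ⟨0, Matrix.isHermitian_zero, ?_, ?_⟩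
        · rw [frobNorm]; simp
        · simp [frobNorm, frob_re_eq]
      simpa using le_csSup hbdd h0
    have hnR : (0:ℝ) < n := by exact_mod_cast hn
    set rr : ℝ := (Real.sqrt n)⁻¹ with hrr
    have hrr2 : rr^2 = 1/n := by
      rw [hrr, sq, ← mul_inv, Real.mul_self_sqrt (le_of_lt hnR), one_div]
    set X₀ : Matrix (Fin n) (Fin n) ℂ := (rr : ℂ) • 1 with hX₀
    have hX₀h : X₀.IsHermitian := by
      unfold Matrix.IsHermitian
      rw [hX₀, Matrix.conjTranspose_smul, Matrix.conjTranspose_one]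
      congr 1
      simp [Complex.star_def, Complex.conj_ofReal]
    have hX₀e : ∀ i j, X₀ i j = if i = j then (rr:ℂ) else 0 := by
      intro i j
      rw [hX₀]
      simp [Matrix.smul_apply, Matrix.one_apply, mul_ite]
    have hfX₀ : frobNorm X₀ ≤ 1 := by
      rw [frobNorm, frob_re_eq]
      have hrow : ∀ i : Fin n, ∑ j, Complex.normSq (X₀ i j) = rr^2 := by
        intro i
        rw [Finset.sum_eq_single i]
        · rw [hX₀e i i, if_pos rfl, Complex.normSq_ofReal, sq]
        · intro j _ hj
          rw [hX₀e i j, if_neg (Ne.symm hj), Complex.normSq_zero]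
        · intro h; exact absurd (Finset.mem_univ i) h
      simp_rw [hrow]
      rw [Finset.sum_const, Finset.card_univ, Fintype.card_fin, nsmul_eq_mul, hrr2]
      rw [mul_one_div, div_self (ne_of_gt hnR), Real.sqrt_one]
    have hτX₀ : (∑ i, A i * X₀ * (A i)ᴴ) = (rr:ℂ) • B := by
      rw [hX₀, hBdef, Finset.smul_sum]
      refine Finset.sum_congr rfl fun i _ => ?_
      rw [Matrix.mul_smul, Matrix.mul_one, Matrix.smul_mul]
    -- tr(B Bᴴ) ≥ n²/m
    have htr_re : ∑ i, (B i i).re = (n:ℝ) := by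
      have h := congrArg Complex.re htrB
      simpa [Matrix.trace, Matrix.diag, Complex.re_sum] using h
    have hCS : ((n:ℝ))^2 ≤ (m:ℝ) * ∑ i, (B i i).re^2 := by
      have h := sq_sum_le_card_mul_sum_sq (s := Finset.univ) (f := fun i : Fin m => (B i i).re)
      rw [htr_re] at h
      simpa using h
    have hdiag : ∑ i, (B i i).re^2 ≤ ∑ i, ∑ j, Complex.normSq (B i j) := by
      refine Finset.sum_le_sum fun i _ => ?_
      refine le_trans ?_ (Finset.single_le_sum
        (f := fun j => Complex.normSq (B i j))
        (fun j _ => Complex.normSq_nonneg _) (Finset.mem_univ i))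
      show (B i i).re ^ 2 ≤ Complex.normSq (B i i)
      rw [Complex.normSq_apply]
      nlinarith [sq_nonneg (B i i).im]
    have ht : (n:ℝ)^2 / m ≤ ∑ i, ∑ j, Complex.normSq (B i j) := by
      rw [div_le_iff₀ hmR]
      calc (n:ℝ)^2 ≤ (m:ℝ) * ∑ i, (B i i).re^2 := hCS
        _ ≤ (m:ℝ) * ∑ i, ∑ j, Complex.normSq (B i j) := by gcongr
        _ = (∑ i, ∑ j, Complex.normSq (B i j)) * m := mul_comm _ _
    have hineq : (n:ℝ)/m ≤ ∑ i, ∑ j, Complex.normSq (((rr:ℂ) • B) i j) := by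
      have hsc : ∀ i j, Complex.normSq (((rr:ℂ) • B) i j) = rr^2 * Complex.normSq (B i j) := by
        intro i j
        rw [Matrix.smul_apply, smul_eq_mul, Complex.normSq_mul, Complex.normSq_ofReal, sq]
      simp_rw [hsc, ← Finset.mul_sum]
      rw [hrr2]
      calc (n:ℝ)/m = 1/n * ((n:ℝ)^2/m) := by field_simp
        _ ≤ 1/n * ∑ i, ∑ j, Complex.normSq (B i j) := by
            apply mul_le_mul_of_nonneg_left ht
            positivity
    have hmem : frobNorm ((rr:ℂ) • B) ∈ {c : ℝ | ∃ X : Matrix (Fin n) (Fin n) ℂ,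
        X.IsHermitian ∧ frobNorm X ≤ 1 ∧ c = frobNorm (∑ i, A i * X * (A i)ᴴ)} :=
      ⟨X₀, hX₀h, hfX₀, by rw [hτX₀]⟩
    refine le_trans ?_ (le_csSup hbdd hmem)
    rw [frobNorm, frob_re_eq]
    exact Real.sqrt_le_sqrt hineq
  refine ⟨hlam, hop, fun hmn => ?_⟩
  have h1 : (1:ℝ) ≤ (n:ℝ)/m := by
    rw [le_div_iff₀ hmR, one_mul]
    exact_mod_cast hmn
  exact ⟨le_trans h1 hlam,
    le_trans (by rw [← Real.sqrt_one]; exact Real.sqrt_le_sqrt h1) hop⟩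
end

section
/- Let τ : S_n(ℂ) → S_m(ℂ) be a quantum channel with m ≤ n. Then σ_1(τ) = 1 if and only if m = n and τ(I_n) = I_n (equivalently, the adjoint map τ^* is also a quantum channel). -/
open scoped ComplexOrder
open Matrix Kronecker

lemma traceMMH {a b : Type*} [Fintype a] [Fintype b] (M : Matrix a b ℂ) :
    (M * Mᴴ).trace.re = ∑ i, ∑ j, Complex.normSq (M i j) := by
  simp [Matrix.trace, Matrix.mul_apply, Matrix.diag, Complex.mul_conj, Matrix.conjTranspose_apply]

lemma traceMMH_nonneg {a b : Type*} [Fintype a] [Fintype b] (M : Matrix a b ℂ) :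
    0 ≤ (M * Mᴴ).trace.re := by
  rw [traceMMH]
  exact Finset.sum_nonneg fun i _ => Finset.sum_nonneg fun j _ => Complex.normSq_nonneg _

lemma traceMMH_zero {a b : Type*} [Fintype a] [Fintype b] (M : Matrix a b ℂ)
    (h : (M * Mᴴ).trace.re = 0) : M = 0 := by
  rw [traceMMH] at h
  ext i j
  have h1 : ∀ i ∈ (Finset.univ : Finset a), (0:ℝ) ≤ ∑ j, Complex.normSq (M i j) :=
    fun i _ => Finset.sum_nonneg fun j _ => Complex.normSq_nonneg _
  have := (Finset.sum_eq_zero_iff_of_nonneg h1).mp h i (Finset.mem_univ i)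
  have h2 : ∀ j ∈ (Finset.univ : Finset b), (0:ℝ) ≤ Complex.normSq (M i j) :=
    fun j _ => Complex.normSq_nonneg _
  have := (Finset.sum_eq_zero_iff_of_nonneg h2).mp this j (Finset.mem_univ j)
  simpa using Complex.normSq_eq_zero.mp this

lemma key {n l : ℕ} (A : Fin l → Matrix (Fin n) (Fin n) ℂ)
    (hA : ∑ i, (A i)ᴴ * A i = 1) (hP : ∑ i, A i * (A i)ᴴ = 1)
    (X : Matrix (Fin n) (Fin n) ℂ) (hX : X.IsHermitian) :
    ((∑ i, A i * X * (A i)ᴴ) * (∑ i, A i * X * (A i)ᴴ)ᴴ).trace.re ≤ (X * Xᴴ).trace.re := by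
  set T : Matrix (Fin n) (Fin n) ℂ := ∑ i, A i * X * (A i)ᴴ with hTdef
  have hT : Tᴴ = T := by
    rw [hTdef, Matrix.conjTranspose_sum]
    refine Finset.sum_congr rfl fun i _ => ?_
    simp [Matrix.conjTranspose_mul, hX.eq, Matrix.mul_assoc]
  have expand : ∀ i : Fin l, (A i * X - T * A i) * (A i * X - T * A i)ᴴ =
      A i * (X * X) * (A i)ᴴ - (A i * X * (A i)ᴴ) * T - T * (A i * X * (A i)ᴴ)
        + T * (A i * (A i)ᴴ) * T := by
    intro i
    simp only [Matrix.conjTranspose_sub, Matrix.conjTranspose_mul, hX.eq, hT]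
    noncomm_ring
  have hsum : ∑ i, (A i * X - T * A i) * (A i * X - T * A i)ᴴ =
      (∑ i, A i * (X * X) * (A i)ᴴ) - T * T := by
    rw [Finset.sum_congr rfl fun i _ => expand i]
    have e1 : ∑ i, (A i * X * (A i)ᴴ) * T = T * T := by
      rw [← Finset.sum_mul, ← hTdef]
    have e2 : ∑ i, T * (A i * X * (A i)ᴴ) = T * T := by
      rw [← Finset.mul_sum, ← hTdef]
    have e3 : ∑ i, T * (A i * (A i)ᴴ) * T = T * T := by
      rw [← Finset.sum_mul, ← Finset.mul_sum, hP, mul_one]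
    rw [Finset.sum_add_distrib, Finset.sum_sub_distrib, Finset.sum_sub_distrib, e1, e2, e3]
    abel
  have htr : (∑ i, ((A i * X - T * A i) * (A i * X - T * A i)ᴴ).trace.re)
      = (X * Xᴴ).trace.re - (T * Tᴴ).trace.re := by
    have h1 : (∑ i, (A i * X - T * A i) * (A i * X - T * A i)ᴴ).trace
        = (X * X).trace - (T * T).trace := by
      rw [hsum, Matrix.trace_sub, Matrix.trace_sum]
      congr 1
      have : ∀ i : Fin l, (A i * (X * X) * (A i)ᴴ).trace = ((A i)ᴴ * A i * (X * X)).trace :=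
        fun i => Matrix.trace_mul_cycle (A i) (X * X) (A i)ᴴ
      rw [Finset.sum_congr rfl fun i _ => this i, ← Matrix.trace_sum, ← Finset.sum_mul, hA,
        one_mul]
    have h2 : (∑ i, (A i * X - T * A i) * (A i * X - T * A i)ᴴ).trace
        = ∑ i, ((A i * X - T * A i) * (A i * X - T * A i)ᴴ).trace := Matrix.trace_sum _ _
    have := congrArg Complex.re (h2.symm.trans h1)
    rw [Complex.sub_re, Complex.re_sum] at this
    rw [hX.eq, hT]
    exact this
  have hnn : 0 ≤ ∑ i, ((A i * X - T * A i) * (A i * X - T * A i)ᴴ).trace.re :=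
    Finset.sum_nonneg fun i _ => traceMMH_nonneg _
  linarith [htr ▸ hnn]

/-- For a quantum channel τ : Sₙ(ℂ) → Sₘ(ℂ) with m ≤ n,
one has σ₁(τ) = 1 if and only if m = n and τ(Iₙ) = Iₙ (i.e. ∑ᵢ Aᵢ Aᵢ* = I,
equivalently the adjoint τ* is also a quantum channel). -/
theorem stmt_12 {n m l : ℕ} (hn : 0 < n) (hmn : m ≤ n)
    (A : Fin l → Matrix (Fin m) (Fin n) ℂ)
    (hA : ∑ i, (A i)ᴴ * A i = 1) :
    opNorm (fun (X : Matrix (Fin n) (Fin n) ℂ) => ∑ i, A i * X * (A i)ᴴ) = 1 ↔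
      m = n ∧ ∑ i, A i * (1 : Matrix (Fin n) (Fin n) ℂ) * (A i)ᴴ = 1 := by
  have hsn : (0:ℝ) < Real.sqrt n := Real.sqrt_pos.mpr (by exact_mod_cast hn)
  set c : ℝ := (Real.sqrt n)⁻¹ with hcdef
  have hc : 0 < c := inv_pos.mpr hsn
  set X₀ : Matrix (Fin n) (Fin n) ℂ := (c : ℂ) • 1 with hX₀def
  have hX₀herm : X₀.IsHermitian := by
    unfold Matrix.IsHermitian
    simp [hX₀def, Matrix.conjTranspose_smul, Complex.star_def, Complex.conj_ofReal]
  have hcc : c * c * (n:ℝ) = 1 := by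
    rw [hcdef]
    have h1 : Real.sqrt n * Real.sqrt n = (n:ℝ) :=
      Real.mul_self_sqrt (by positivity)
    field_simp
    try linarith [h1]
  have hX₀tr : (X₀ * X₀ᴴ).trace.re = 1 := by
    have h1 : (X₀ * X₀ᴴ).trace = ((c * c * (n:ℝ) : ℝ) : ℂ) := by
      rw [hX₀herm.eq, hX₀def, Matrix.smul_mul, Matrix.mul_smul, mul_one,
        Matrix.trace_smul, Matrix.trace_smul, Matrix.trace_one]
      simp only [smul_eq_mul, Fintype.card_fin]
      push_cast
      try ring
    rw [h1, hcc, Complex.ofReal_one, Complex.one_re]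
  have hX₀norm : frobNorm X₀ = 1 := by
    rw [frobNorm, hX₀tr, Real.sqrt_one]
  set P : Matrix (Fin m) (Fin m) ℂ := ∑ i, A i * (A i)ᴴ with hPdef
  have hPH : Pᴴ = P := by
    rw [hPdef, Matrix.conjTranspose_sum]
    exact Finset.sum_congr rfl fun i _ => by simp [Matrix.conjTranspose_mul]
  have htrP : P.trace = (n : ℂ) := by
    rw [hPdef, Matrix.trace_sum]
    rw [Finset.sum_congr rfl fun i _ => Matrix.trace_mul_comm (A i) (A i)ᴴ]
    rw [← Matrix.trace_sum, hA, Matrix.trace_one]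
    simp
  have hτX₀ : ∑ i, A i * X₀ * (A i)ᴴ = (c : ℂ) • P := by
    rw [hPdef, Finset.smul_sum]
    exact Finset.sum_congr rfl fun i _ => by
      simp [hX₀def, Matrix.mul_smul, Matrix.smul_mul]
  set t : ℝ := (P * Pᴴ).trace.re with htdef
  have ht0 : 0 ≤ t := traceMMH_nonneg P
  have hτX₀norm : frobNorm (∑ i, A i * X₀ * (A i)ᴴ) = c * Real.sqrt t := by
    rw [hτX₀, frobNorm]
    have hsm : ((c:ℂ) • P) * ((c:ℂ) • P)ᴴ = ((c * c : ℝ) : ℂ) • (P * Pᴴ) := by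
      rw [Matrix.conjTranspose_smul, Matrix.smul_mul, Matrix.mul_smul, smul_smul]
      congr 1
      simp [Complex.star_def, Complex.conj_ofReal]
      try push_cast
      try ring
    have : ((c:ℂ) • P * ((c:ℂ) • P)ᴴ).trace.re = c^2 * t := by
      rw [hsm, Matrix.trace_smul, smul_eq_mul, Complex.re_ofReal_mul, htdef]
      ring
    rw [this, Real.sqrt_mul (sq_nonneg c), Real.sqrt_sq hc.le]
  constructor
  · intro hsup
    rw [opNorm] at hsup
    have hmem : c * Real.sqrt t ∈
        {c : ℝ | ∃ X : Matrix (Fin n) (Fin n) ℂ, X.IsHermitian ∧ frobNorm X ≤ 1 ∧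
          c = frobNorm ((fun X => ∑ i, A i * X * (A i)ᴴ) X)} :=
      ⟨X₀, hX₀herm, le_of_eq hX₀norm, hτX₀norm.symm⟩
    have hbdd : BddAbove {c : ℝ | ∃ X : Matrix (Fin n) (Fin n) ℂ, X.IsHermitian ∧
        frobNorm X ≤ 1 ∧ c = frobNorm ((fun X => ∑ i, A i * X * (A i)ᴴ) X)} := by
      by_contra hb
      rw [csSup_of_not_bddAbove hb, Real.sSup_empty] at hsup
      norm_num at hsup
    have hle : c * Real.sqrt t ≤ 1 := hsup ▸ le_csSup hbdd hmem
    have hst : Real.sqrt t ≤ Real.sqrt n := by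
      rw [hcdef] at hle
      calc Real.sqrt t = Real.sqrt n * ((Real.sqrt n)⁻¹ * Real.sqrt t) := by
            field_simp
        _ ≤ Real.sqrt n * 1 := by
            exact mul_le_mul_of_nonneg_left hle hsn.le
        _ = Real.sqrt n := mul_one _
    have htn : t ≤ n := by
      have h1 : t = Real.sqrt t ^ 2 := (Real.sq_sqrt ht0).symm
      have h2 : Real.sqrt t ^ 2 ≤ Real.sqrt n ^ 2 :=
        pow_le_pow_left₀ (Real.sqrt_nonneg _) hst 2
      rw [Real.sq_sqrt (by positivity : (0:ℝ) ≤ (n:ℝ))] at h2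
      linarith
    have hm : 0 < m := by
      rcases Nat.eq_zero_or_pos m with hm0 | hm
      · exfalso
        subst hm0
        have : P.trace = 0 := by simp [Matrix.trace]
        rw [htrP] at this
        exact_mod_cast hn.ne' (by exact_mod_cast this)
      · exact hm
    set r : ℝ := (n : ℝ) / m with hrdef
    have hr : 0 < r := div_pos (by exact_mod_cast hn) (by exact_mod_cast hm)
    set Q : Matrix (Fin m) (Fin m) ℂ := P - ((r:ℝ):ℂ) • 1 with hQdef
    have hQH : Qᴴ = Q := by
      simp [hQdef, Matrix.conjTranspose_sub, Matrix.conjTranspose_smul, hPH,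
        Complex.star_def, Complex.conj_ofReal]
    have hQQ : Q * Q = P * P - ((r:ℝ):ℂ) • P - ((r:ℝ):ℂ) • P
        + (((r:ℝ):ℂ) * ((r:ℝ):ℂ)) • (1 : Matrix (Fin m) (Fin m) ℂ) := by
      rw [hQdef]
      simp only [Matrix.sub_mul, Matrix.mul_sub, Matrix.smul_mul, Matrix.mul_smul,
        Matrix.mul_one, Matrix.one_mul, smul_smul, smul_sub]
      abel
    have hQtr : (Q * Qᴴ).trace.re = t - 2 * r * n + r ^ 2 * m := by
      rw [hQH, hQQ]
      simp only [Matrix.trace_add, Matrix.trace_sub, Matrix.trace_smul, htrP,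
        Matrix.trace_one]
      have hPP : (P * P).trace.re = t := by rw [htdef, hPH]
      simp only [Complex.add_re, Complex.sub_re, smul_eq_mul]
      rw [hPP]
      have e1 : (((r:ℝ):ℂ) * (n:ℂ)).re = r * n := by
        rw [show ((n:ℕ):ℂ) = ((n:ℝ):ℂ) by push_cast; ring, ← Complex.ofReal_mul,
          Complex.ofReal_re]
      have e2 : (((r:ℝ):ℂ) * ((r:ℝ):ℂ) * (Fintype.card (Fin m) : ℂ)).re = r ^ 2 * m := by
        rw [show (Fintype.card (Fin m) : ℂ) = ((m:ℝ):ℂ) by simp, ← Complex.ofReal_mul,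
          ← Complex.ofReal_mul, Complex.ofReal_re]
        ring
      rw [e1, e2]
      ring
    have hQnn : 0 ≤ (Q * Qᴴ).trace.re := traceMMH_nonneg Q
    have hkey : (n:ℝ)^2 / m ≤ t := by
      rw [hQtr] at hQnn
      have : r^2 * m = (n:ℝ)^2/m := by
        rw [hrdef]; field_simp
      have h2 : 2 * r * (n:ℝ) = 2 * ((n:ℝ)^2/m) := by
        rw [hrdef]; field_simp
      rw [this, h2] at hQnn
      linarith
    have hnm : (n:ℝ) ≤ m := by
      have hmpos : (0:ℝ) < m := by exact_mod_cast hm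
      have h1 : (n:ℝ)^2 / m ≤ n := le_trans hkey htn
      have h2 : (n:ℝ)^2 ≤ n * m := by
        rw [div_le_iff₀ hmpos] at h1; nlinarith
      have hnpos : (0:ℝ) < n := by exact_mod_cast hn
      nlinarith
    have hmeq : m = n := le_antisymm hmn (by exact_mod_cast hnm)
    refine ⟨hmeq, ?_⟩
    have hr1 : r = 1 := by
      rw [hrdef, hmeq, div_self (by exact_mod_cast hn.ne' : (n:ℝ) ≠ 0)]
    have hQzero : Q = 0 := by
      apply traceMMH_zero
      rw [hQtr, hr1]
      have : t = (n:ℝ) := by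
        have := hkey
        rw [hmeq] at this
        have h3 : (n:ℝ)^2/(n:ℝ) = n := by
          rw [sq, mul_div_assoc, div_self (by exact_mod_cast hn.ne' : (n:ℝ) ≠ 0), mul_one]
        rw [h3] at this
        linarith
      rw [this, hmeq]
      ring
    have hP1 : P = 1 := by
      have := hQzero
      rw [hQdef, sub_eq_zero] at this
      rw [this, hr1]
      norm_num
    simp only [Matrix.mul_one]
    exact hP1
  · rintro ⟨hmeq, hunital⟩
    subst hmeq
    have hP1 : P = 1 := by
      rw [hPdef]
      simpa only [Matrix.mul_one] using hunital
    rw [opNorm]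
    apply IsGreatest.csSup_eq
    constructor
    · refine ⟨X₀, hX₀herm, le_of_eq hX₀norm, ?_⟩
      show (1:ℝ) = frobNorm (∑ i, A i * X₀ * (A i)ᴴ)
      rw [hτX₀norm]
      have htm : t = Real.sqrt m * Real.sqrt m := by
        rw [htdef, hP1, Matrix.conjTranspose_one, one_mul, Matrix.trace_one,
          Real.mul_self_sqrt (by positivity)]
        simp
      rw [htm, Real.sqrt_mul_self (Real.sqrt_nonneg _), hcdef]
      exact (inv_mul_cancel₀ hsn.ne').symm
    · rintro d ⟨X, hXH, hXn, rfl⟩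
      show frobNorm (∑ i, A i * X * (A i)ᴴ) ≤ 1
      have hcontr := key A hA (hPdef ▸ hP1) X hXH
      rw [frobNorm] at hXn ⊢
      calc Real.sqrt (((∑ i, A i * X * (A i)ᴴ) * (∑ i, A i * X * (A i)ᴴ)ᴴ).trace.re)
          ≤ Real.sqrt ((X * Xᴴ).trace.re) := Real.sqrt_le_sqrt hcontr
        _ ≤ 1 := hXn
end

section
/- Let τ : S_n(ℂ) → S_m(ℂ) be a quantum channel with Kraus operators A_1,…,A_l, A(τ) := ∑_{i=1}^l A_i A_i^*, and suppose λ_1(A(τ)) < 1. Let m′ ≥ 2 be the smallest positive integer with ∑_{i=1}^{m′} λ_i(A(τ)) ≥ 1 and set η := 1 − ∑_{i=1}^{m′−1} λ_i(A(τ)). Then the minimum output entropy satisfies H(τ) ≥ F(A(τ)) := −η log η − ∑_{i=1}^{m′−1} λ_i(A(τ)) log λ_i(A(τ)). Moreover F(A(τ)) ≥ −log λ_1(A(τ)). -/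
open scoped ComplexOrder
open Matrix Kronecker

section ST13Lemmas

lemma st13_tangent {a b : ℝ} (ha : 0 < a) (hb : 0 ≤ b) :
    a * Real.log a + (Real.log a + 1) * (b - a) ≤ b * Real.log b := by
  rcases eq_or_lt_of_le hb with h | hb
  · subst h; simp; nlinarith [Real.log_le_sub_one_of_pos ha, ha]
  · have h1 : Real.log (a / b) ≤ a / b - 1 := Real.log_le_sub_one_of_pos (by positivity)
    have h2 : Real.log (a / b) = Real.log a - Real.log b := Real.log_div (ne_of_gt ha) (ne_of_gt hb)
    have key : b * (Real.log a - Real.log b) ≤ a - b := by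
      have h3 := mul_le_mul_of_nonneg_left h1 hb.le
      rw [h2] at h3
      have h4 : b * (a / b - 1) = a - b := by field_simp
      linarith
    nlinarith [key]

open Finset in
/-- Schur-concavity style entropy comparison. -/
lemma st13_schur (N : ℕ) (μ ν : ℕ → ℝ)
    (hμ0 : ∀ k, 0 ≤ μ k) (hμa : ∀ ⦃j k : ℕ⦄, j ≤ k → μ k ≤ μ j)
    (hμz : ∀ k, N ≤ k → μ k = 0) (hμs : ∑ k ∈ range N, μ k = 1)
    (hν0 : ∀ k, 0 ≤ ν k) (hνz : ∀ k, N ≤ k → ν k = 0)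
    (hνs : ∑ k ∈ range N, ν k = 1)
    (hle : ∀ K, ∑ k ∈ range K, μ k ≤ ∑ k ∈ range K, ν k) :
    ∑ k ∈ range N, μ k * Real.log (μ k) ≤ ∑ k ∈ range N, ν k * Real.log (ν k) := by
  classical
  have hex : ∃ k, μ k = 0 := ⟨N, hμz N le_rfl⟩
  set r := Nat.find hex with hr
  have hrN : r ≤ N := Nat.find_le (hμz N le_rfl)
  have hpos : ∀ k < r, 0 < μ k := fun k hk =>
    lt_of_le_of_ne (hμ0 k) (Ne.symm (Nat.find_min hex hk))
  have hzero : ∀ k, r ≤ k → μ k = 0 := fun k hk =>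
    le_antisymm ((Nat.find_spec hex ▸ hμa hk : μ k ≤ μ r).trans_eq (Nat.find_spec hex)) (hμ0 k)
  have hr1 : 1 ≤ r := by
    by_contra h
    push_neg at h
    interval_cases r
    · have : ∀ k ∈ range N, μ k = 0 := fun k _ => hzero k (Nat.zero_le k)
      rw [Finset.sum_congr rfl this] at hμs
      simp at hμs
  -- sums over range r
  have hsub : range r ⊆ range N := range_subset_range.2 hrN
  have hμsr : ∑ k ∈ range r, μ k = 1 := by
    rw [← hμs]
    exact Finset.sum_subset hsub (fun k _ hk => hzero k (by simpa using hk))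
  have hνsr : ∑ k ∈ range r, ν k = 1 := by
    have h1 : (1:ℝ) ≤ ∑ k ∈ range r, ν k := hμsr ▸ hle r
    have h2 : ∑ k ∈ range r, ν k ≤ 1 :=
      hνs ▸ Finset.sum_le_sum_of_subset_of_nonneg hsub (fun k _ _ => hν0 k)
    linarith
  have hνzero : ∀ k, r ≤ k → ν k = 0 := by
    intro k hk
    rcases lt_or_ge k N with hkN | hkN
    · have hsum0 : ∑ j ∈ range N \ range r, ν j = 0 := by
        have := Finset.sum_sdiff hsub (f := ν)
        rw [hνsr, hνs] at this; linarith
      have := (Finset.sum_eq_zero_iff_of_nonneg (fun j _ => hν0 j)).1 hsum0 k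
      exact this (by simp [Finset.mem_sdiff, hkN, hk, not_lt.2 hk])
    · exact hνz k hkN
  -- reduce both sums to range r
  have hμred : ∑ k ∈ range N, μ k * Real.log (μ k) = ∑ k ∈ range r, μ k * Real.log (μ k) :=
    (Finset.sum_subset hsub (fun k _ hk => by rw [hzero k (by simpa using hk)]; simp)).symm
  have hνred : ∑ k ∈ range N, ν k * Real.log (ν k) = ∑ k ∈ range r, ν k * Real.log (ν k) :=
    (Finset.sum_subset hsub (fun k _ hk => by rw [hνzero k (by simpa using hk)]; simp)).symm
  rw [hμred, hνred]
  -- tangent line inequality summed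
  have htan : ∀ k ∈ range r,
      μ k * Real.log (μ k) + (Real.log (μ k) + 1) * (ν k - μ k) ≤ ν k * Real.log (ν k) :=
    fun k hk => st13_tangent (hpos k (mem_range.1 hk)) (hν0 k)
  have hsumtan := Finset.sum_le_sum htan
  rw [Finset.sum_add_distrib] at hsumtan
  -- the correction term splits
  have hsplit : ∑ k ∈ range r, (Real.log (μ k) + 1) * (ν k - μ k)
      = (∑ k ∈ range r, Real.log (μ k) * (ν k - μ k)) + (∑ k ∈ range r, (ν k - μ k)) := by
    rw [← Finset.sum_add_distrib]
    exact Finset.sum_congr rfl (fun k _ => by ring)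
  have hzero2 : ∑ k ∈ range r, (ν k - μ k) = 0 := by
    rw [Finset.sum_sub_distrib, hμsr, hνsr]; ring
  -- Abel summation: the main term is nonneg
  have habel : 0 ≤ ∑ k ∈ range r, Real.log (μ k) * (ν k - μ k) := by
    have hby := Finset.sum_range_by_parts (fun k => Real.log (μ k)) (fun k => ν k - μ k) r
    simp only [smul_eq_mul] at hby
    rw [hby, hzero2, mul_zero, zero_sub]
    have hnp : ∑ x ∈ range (r - 1),
        (Real.log (μ (x + 1)) - Real.log (μ x)) * ∑ i ∈ range (x + 1), (ν i - μ i) ≤ 0 := by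
      apply Finset.sum_nonpos
      intro i hi
      have hi' : i + 1 < r := by have := mem_range.1 hi; omega
      have hS : 0 ≤ ∑ j ∈ range (i+1), (ν j - μ j) := by
        rw [Finset.sum_sub_distrib]
        have := hle (i+1); linarith
      have hlog : Real.log (μ (i+1)) ≤ Real.log (μ i) :=
        Real.log_le_log (hpos (i+1) hi') (hμa (Nat.le_succ i))
      exact mul_nonpos_of_nonpos_of_nonneg (by linarith) hS
    linarith
  linarith [hsumtan, hsplit, hzero2, habel]

variable {N : ℕ} {W : Matrix (Fin N) (Fin N) ℂ}

lemma st13_eigsDesc_apply (hW : W.IsHermitian) (i : Fin N) :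
    eigsDesc W i = hW.eigenvalues ((Fin.revPerm.trans (Tuple.sort hW.eigenvalues)) i) := by
  rw [eigsDesc, dif_pos hW]; rfl

lemma st13_eigsDesc_antitone (hW : W.IsHermitian) {i j : Fin N} (h : i ≤ j) :
    eigsDesc W j ≤ eigsDesc W i := by
  rw [eigsDesc, dif_pos hW]
  exact Tuple.monotone_sort hW.eigenvalues (Fin.rev_le_rev.2 h)

lemma st13_sum_eigsDesc_comp (hW : W.IsHermitian) (g : ℝ → ℝ) :
    ∑ i, g (eigsDesc W i) = ∑ i, g (hW.eigenvalues i) := by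
  simp only [st13_eigsDesc_apply hW]
  exact Equiv.sum_comp (Fin.revPerm.trans (Tuple.sort hW.eigenvalues))
    (fun i => g (hW.eigenvalues i))

lemma st13_trace_eq (hW : W.IsHermitian) :
    W.trace = ((∑ i, hW.eigenvalues i : ℝ) : ℂ) := by
  conv_lhs => rw [hW.spectral_theorem, Unitary.conjStarAlgAut_apply]
  rw [Matrix.trace_mul_comm, ← Matrix.mul_assoc]
  rw [(Matrix.mem_unitaryGroup_iff').mp (hW.eigenvectorUnitary).2, Matrix.one_mul,
    Matrix.trace_diagonal]
  push_cast
  rfl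

lemma st13_diag_re_nonneg {M : Matrix (Fin N) (Fin N) ℂ} (hM : M.PosSemidef) (j : Fin N) :
    0 ≤ (M j j).re := by
  have := hM.re_dotProduct_nonneg (Pi.single j 1)
  simpa [dotProduct, Pi.single_apply, apply_ite (star : ℂ → ℂ), mul_comm] using this

lemma st13_trace_re_nonneg {M : Matrix (Fin N) (Fin N) ℂ} (hM : M.PosSemidef) :
    0 ≤ M.trace.re := by
  rw [Matrix.trace]
  rw [Complex.re_sum]
  exact Finset.sum_nonneg fun j _ => st13_diag_re_nonneg hM j

open scoped MatrixOrder in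
lemma st13_trace_mul_re_nonneg {P Z : Matrix (Fin N) (Fin N) ℂ} (hP : P.PosSemidef)
    (hZ : Z.PosSemidef) : 0 ≤ ((P * Z).trace).re := by
  obtain ⟨B, rfl⟩ := CStarAlgebra.nonneg_iff_eq_star_mul_self.mp hP.nonneg
  rw [Matrix.mul_assoc, Matrix.trace_mul_comm]
  exact st13_trace_re_nonneg (by simpa [Matrix.mul_assoc, Matrix.star_eq_conjTranspose] using hZ.mul_mul_conjTranspose_same B)

/-- extension of a `Fin N` tuple to `ℕ` by zero -/
noncomputable def st13ext {N : ℕ} (f : Fin N → ℝ) : ℕ → ℝ :=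
  fun k => if h : k < N then f ⟨k, h⟩ else 0

lemma st13ext_apply {N : ℕ} (f : Fin N → ℝ) (i : Fin N) : st13ext f i = f i := by
  simp [st13ext, Fin.is_lt]

lemma st13ext_zero {N : ℕ} (f : Fin N → ℝ) {k : ℕ} (h : N ≤ k) : st13ext f k = 0 := by
  simp [st13ext, Nat.not_lt.2 h]

lemma st13_range_sum {N : ℕ} (f : Fin N → ℝ) (K : ℕ) :
    ∑ k ∈ Finset.range K, st13ext f k = ∑ i : Fin N, if (i : ℕ) < K then f i else 0 := by
  have h1 : ∑ k ∈ Finset.range K, st13ext f k = ∑ k ∈ Finset.range (min K N), st13ext f k := by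
    refine (Finset.sum_subset (Finset.range_subset_range.2 (min_le_left _ _)) ?_).symm
    intro k hk hk'
    simp only [Finset.mem_range] at hk hk'
    exact st13ext_zero f (by omega)
  have h2 : ∑ i : Fin N, (if (i : ℕ) < K then f i else 0)
      = ∑ k ∈ Finset.range N, (if k < K then st13ext f k else 0) := by
    rw [← Fin.sum_univ_eq_sum_range (fun k => if k < K then st13ext f k else 0) N]
    exact Finset.sum_congr rfl fun i _ => by rw [st13ext_apply]
  have e1 : ∑ k ∈ Finset.range (min K N), st13ext f k
      = ∑ k ∈ Finset.range (min K N), (if k < K then st13ext f k else 0) :=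
    Finset.sum_congr rfl fun k hk => by
      rw [if_pos (by simp only [Finset.mem_range] at hk; omega)]
  have e2 : ∑ k ∈ Finset.range (min K N), (if k < K then st13ext f k else 0)
      = ∑ k ∈ Finset.range N, (if k < K then st13ext f k else 0) := by
    refine Finset.sum_subset (Finset.range_subset_range.2 (min_le_right _ _)) ?_
    intro k hk hk'
    simp only [Finset.mem_range] at hk hk'
    by_cases hkK : k < K
    · rw [if_pos hkK, st13ext_zero f (by omega)]
    · rw [if_neg hkK]
  rw [h1, h2, e1, e2]

open Finset in
lemma st13_kyfan_upper (hW : W.IsHermitian) {P : Matrix (Fin N) (Fin N) ℂ}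
    (hP : P.PosSemidef) (hP1 : (1 - P).PosSemidef) {K : ℕ} (hK1 : 1 ≤ K) (hKN : K ≤ N)
    (htr : P.trace = (K : ℂ)) :
    ((P * W).trace).re ≤ ∑ i : Fin N, if (i : ℕ) < K then eigsDesc W i else 0 := by
  classical
  set V : Matrix (Fin N) (Fin N) ℂ := (hW.eigenvectorUnitary : Matrix (Fin N) (Fin N) ℂ) with hV
  have hV1 : Vᴴ * V = 1 := by
    rw [← Matrix.star_eq_conjTranspose]
    exact (Matrix.mem_unitaryGroup_iff').mp (hW.eigenvectorUnitary).2
  have hV2 : V * Vᴴ = 1 := by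
    rw [← Matrix.star_eq_conjTranspose]
    exact (Matrix.mem_unitaryGroup_iff).mp (hW.eigenvectorUnitary).2
  set D : Matrix (Fin N) (Fin N) ℂ := Matrix.diagonal (RCLike.ofReal ∘ hW.eigenvalues) with hD
  set M : Matrix (Fin N) (Fin N) ℂ := Vᴴ * P * V with hM
  have hMpsd : M.PosSemidef := hP.conjTranspose_mul_mul_same V
  have hM1psd : (1 - M).PosSemidef := by
    have h0 := hP1.conjTranspose_mul_mul_same V
    have he : Vᴴ * (1 - P) * V = 1 - M := by
      rw [Matrix.mul_sub, Matrix.mul_one, Matrix.sub_mul, hV1, hM]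
    rwa [he] at h0
  have htrace : (P * W).trace = (M * D).trace := by
    conv_lhs => rw [hW.spectral_theorem, Unitary.conjStarAlgAut_apply]
    rw [Matrix.star_eq_conjTranspose, ← hV, ← hD]
    rw [show P * (V * D * Vᴴ) = P * (V * D) * Vᴴ by noncomm_ring]
    rw [Matrix.trace_mul_cycle]
    rw [show Vᴴ * P * (V * D) = Vᴴ * P * V * D by noncomm_ring]
  have htrM : M.trace = (K : ℂ) := by
    rw [hM, Matrix.trace_mul_cycle, hV2, Matrix.one_mul, htr]
  set q : Fin N → ℝ := fun j => (M j j).re with hq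
  have hq0 : ∀ j, 0 ≤ q j := fun j => st13_diag_re_nonneg hMpsd j
  have hq1 : ∀ j, q j ≤ 1 := by
    intro j
    have := st13_diag_re_nonneg hM1psd j
    simp only [Matrix.sub_apply, Matrix.one_apply_eq, Complex.sub_re, Complex.one_re] at this
    linarith
  have hqs : ∑ j, q j = (K : ℝ) := by
    have : M.trace.re = (K : ℝ) := by rw [htrM]; simp
    rw [← this, Matrix.trace, Complex.re_sum]
    rfl
  have hre : ((M * D).trace).re = ∑ j, q j * hW.eigenvalues j := by
    rw [Matrix.trace, Complex.re_sum]
    refine Finset.sum_congr rfl fun j _ => ?_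
    rw [Matrix.diag_apply, Matrix.mul_diagonal]
    simp [Complex.mul_re, Function.comp, hq]
  rw [htrace, hre]
  -- reindex by the sorting permutation
  set π := (Fin.revPerm.trans (Tuple.sort hW.eigenvalues)) with hπ
  have hreidx : ∑ j, q j * hW.eigenvalues j = ∑ i, q (π i) * eigsDesc W i := by
    rw [← Equiv.sum_comp π (fun j => q j * hW.eigenvalues j)]
    exact Finset.sum_congr rfl fun i _ => by rw [st13_eigsDesc_apply hW]
  rw [hreidx]
  set t : ℝ := eigsDesc W ⟨K - 1, by omega⟩ with ht
  have hpoint : ∀ i : Fin N, q (π i) * eigsDesc W i ≤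
      (if (i : ℕ) < K then eigsDesc W i else 0) + t * (q (π i) - if (i : ℕ) < K then 1 else 0) := by
    intro i
    by_cases hi : (i : ℕ) < K
    · rw [if_pos hi, if_pos hi]
      have hdt : t ≤ eigsDesc W i := st13_eigsDesc_antitone hW (by simp [Fin.le_def]; omega)
      nlinarith [hq1 (π i), hq0 (π i)]
    · rw [if_neg hi, if_neg hi]
      have hdt : eigsDesc W i ≤ t := st13_eigsDesc_antitone hW (by simp [Fin.le_def]; omega)
      nlinarith [hq0 (π i)]
  calc ∑ i : Fin N, q (π i) * eigsDesc W i
      ≤ ∑ i : Fin N, ((if (i : ℕ) < K then eigsDesc W i else 0)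
          + t * (q (π i) - if (i : ℕ) < K then 1 else 0)) :=
        Finset.sum_le_sum fun i _ => hpoint i
    _ = (∑ i : Fin N, if (i : ℕ) < K then eigsDesc W i else 0)
          + t * ((∑ i : Fin N, q (π i)) - ∑ i : Fin N, (if (i : ℕ) < K then (1:ℝ) else 0)) := by
        rw [Finset.sum_add_distrib, ← Finset.mul_sum, Finset.sum_sub_distrib]
    _ = ∑ i : Fin N, if (i : ℕ) < K then eigsDesc W i else 0 := by
        have h1 : ∑ i : Fin N, q (π i) = (K : ℝ) := by rw [Equiv.sum_comp π q, hqs]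
        have h2 : ∑ i : Fin N, (if (i : ℕ) < K then (1:ℝ) else 0) = (K : ℝ) := by
          rw [← st13_range_sum (fun _ => (1:ℝ)) K]
          rw [Finset.sum_congr rfl (fun k hk => show st13ext (fun _ : Fin N => (1:ℝ)) k = 1 by
            simp [st13ext, dif_pos (lt_of_lt_of_le (Finset.mem_range.1 hk) hKN)])]
          simp
        rw [h1, h2, sub_self, mul_zero, add_zero]

open Finset in
lemma st13_sum_ite_cast {K : ℕ} (hKN : K ≤ N) :
    ∑ i : Fin N, (if (i : ℕ) < K then (1:ℂ) else 0) = (K : ℂ) := by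
  rw [Fin.sum_univ_eq_sum_range (fun k => if k < K then (1:ℂ) else 0) N]
  rw [← Finset.sum_subset (Finset.range_subset_range.2 hKN)
    (fun k _ hk => if_neg (by simpa using hk))]
  rw [Finset.sum_congr rfl (fun k hk => if_pos (Finset.mem_range.1 hk))]
  simp

open Finset in
lemma st13_kyfan_lower (hW : W.IsHermitian) {K : ℕ} (hKN : K ≤ N) :
    ∃ P : Matrix (Fin N) (Fin N) ℂ, P.PosSemidef ∧ (1 - P).PosSemidef ∧ P.trace = (K : ℂ) ∧
      ((P * W).trace).re = ∑ i : Fin N, if (i : ℕ) < K then eigsDesc W i else 0 := by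
  classical
  set V : Matrix (Fin N) (Fin N) ℂ := (hW.eigenvectorUnitary : Matrix (Fin N) (Fin N) ℂ) with hV
  have hV1 : Vᴴ * V = 1 := by
    rw [← Matrix.star_eq_conjTranspose]
    exact (Matrix.mem_unitaryGroup_iff').mp (hW.eigenvectorUnitary).2
  have hV2 : V * Vᴴ = 1 := by
    rw [← Matrix.star_eq_conjTranspose]
    exact (Matrix.mem_unitaryGroup_iff).mp (hW.eigenvectorUnitary).2
  set D : Matrix (Fin N) (Fin N) ℂ := Matrix.diagonal (RCLike.ofReal ∘ hW.eigenvalues) with hD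
  set π := (Fin.revPerm.trans (Tuple.sort hW.eigenvalues)) with hπ
  set χ : Fin N → ℂ := fun j => if ((π.symm j : Fin N) : ℕ) < K then 1 else 0 with hχ
  set E : Matrix (Fin N) (Fin N) ℂ := Matrix.diagonal χ with hE
  refine ⟨V * E * Vᴴ, ?_, ?_, ?_, ?_⟩
  · exact (Matrix.posSemidef_diagonal_iff.mpr (fun j => by
      by_cases h : ((π.symm j : Fin N) : ℕ) < K <;> simp [hχ, h])).mul_mul_conjTranspose_same V
  · have he : 1 - V * E * Vᴴ = V * (1 - E) * Vᴴ := by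
      rw [Matrix.mul_sub, Matrix.mul_one, Matrix.sub_mul, hV2]
    rw [he]
    refine Matrix.PosSemidef.mul_mul_conjTranspose_same ?_ V
    have : (1 : Matrix (Fin N) (Fin N) ℂ) - E = Matrix.diagonal (fun j => 1 - χ j) := by
      rw [hE, ← Matrix.diagonal_one, Matrix.diagonal_sub]
    rw [this]
    exact Matrix.posSemidef_diagonal_iff.mpr (fun j => by
      by_cases h : ((π.symm j : Fin N) : ℕ) < K <;> simp [hχ, h])
  · rw [Matrix.trace_mul_cycle, hV1, Matrix.one_mul, Matrix.trace_diagonal]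
    have := Equiv.sum_comp π χ
    rw [← this]
    rw [Finset.sum_congr rfl (fun i _ => show χ (π i) = if (i : ℕ) < K then (1:ℂ) else 0 by
      simp [hχ])]
    exact st13_sum_ite_cast hKN
  · have he : V * E * Vᴴ * W = V * (E * D) * Vᴴ := by
      conv_lhs => rw [hW.spectral_theorem, Unitary.conjStarAlgAut_apply, Matrix.star_eq_conjTranspose, ← hV, ← hD]
      calc V * E * Vᴴ * (V * D * Vᴴ) = V * E * (Vᴴ * V) * D * Vᴴ := by noncomm_ring
        _ = V * (E * D) * Vᴴ := by rw [hV1]; noncomm_ring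
    rw [he, Matrix.trace_mul_cycle, hV1, Matrix.one_mul]
    have htr : (E * D).trace = ∑ j, χ j * (hW.eigenvalues j : ℂ) := by
      rw [hE, hD, Matrix.diagonal_mul_diagonal, Matrix.trace_diagonal]
      rfl
    rw [htr]
    have : ∀ j, (χ j * (hW.eigenvalues j : ℂ)).re
        = (if ((π.symm j : Fin N) : ℕ) < K then hW.eigenvalues j else 0) := by
      intro j
      by_cases h : ((π.symm j : Fin N) : ℕ) < K <;> simp [hχ, h]
    rw [Complex.re_sum, Finset.sum_congr rfl (fun j _ => this j)]
    rw [← Equiv.sum_comp π (fun j => if ((π.symm j : Fin N) : ℕ) < K then hW.eigenvalues j else 0)]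
    refine Finset.sum_congr rfl (fun i _ => ?_)
    rw [st13_eigsDesc_apply hW, ← hπ, Equiv.symm_apply_apply]

open Finset in
lemma st13_sumTop_mono {Y Z : Matrix (Fin N) (Fin N) ℂ} (hY : Y.PosSemidef) (hZ : Z.PosSemidef)
    (hW : (Y + Z).IsHermitian) {K : ℕ} (hKN : K ≤ N) :
    (∑ i : Fin N, if (i : ℕ) < K then eigsDesc Y i else 0)
      ≤ ∑ i : Fin N, if (i : ℕ) < K then eigsDesc (Y + Z) i else 0 := by
  rcases Nat.eq_zero_or_pos K with rfl | hK1
  · simp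
  obtain ⟨P, hP, hP1, htr, hach⟩ := st13_kyfan_lower hY.1 hKN
  rw [← hach]
  have h1 : ((P * (Y + Z)).trace).re = ((P * Y).trace).re + ((P * Z).trace).re := by
    rw [Matrix.mul_add, Matrix.trace_add, Complex.add_re]
  have h2 := st13_trace_mul_re_nonneg hP hZ
  have h3 := st13_kyfan_upper hW hP hP1 hK1 hKN htr
  linarith

lemma st13_psd_finsum {ι : Type*} [Fintype ι] (f : ι → Matrix (Fin N) (Fin N) ℂ)
    (hf : ∀ i, (f i).PosSemidef) : (∑ i, f i).PosSemidef := by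
  classical
  refine Finset.sum_induction f _ (fun a b ha hb => ha.add hb) ?_ (fun i _ => hf i)
  exact Matrix.PosSemidef.zero

lemma st13_sum_eigenvalues_eq_one {X : Matrix (Fin N) (Fin N) ℂ} (hX : X.PosSemidef)
    (htr : X.trace = 1) : ∑ i, hX.1.eigenvalues i = 1 := by
  have := st13_trace_eq hX.1
  rw [htr] at this
  exact_mod_cast this.symm

lemma st13_one_sub_psd {X : Matrix (Fin N) (Fin N) ℂ} (hX : X.PosSemidef)
    (htr : X.trace = 1) : ((1 : Matrix (Fin N) (Fin N) ℂ) - X).PosSemidef := by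
  classical
  have hev : ∀ i, hX.1.eigenvalues i ≤ 1 := by
    intro i
    rw [← st13_sum_eigenvalues_eq_one hX htr]
    exact Finset.single_le_sum (fun j _ => hX.eigenvalues_nonneg j) (Finset.mem_univ i)
  set V : Matrix (Fin N) (Fin N) ℂ := (hX.1.eigenvectorUnitary : Matrix (Fin N) (Fin N) ℂ) with hV
  have hV2 : V * Vᴴ = 1 := by
    rw [← Matrix.star_eq_conjTranspose]
    exact (Matrix.mem_unitaryGroup_iff).mp (hX.1.eigenvectorUnitary).2
  have he : (1 : Matrix (Fin N) (Fin N) ℂ) - X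
      = V * Matrix.diagonal (fun i => 1 - (hX.1.eigenvalues i : ℂ)) * Vᴴ := by
    conv_lhs => rw [hX.1.spectral_theorem, Unitary.conjStarAlgAut_apply, Matrix.star_eq_conjTranspose, ← hV]
    rw [show Matrix.diagonal (fun i => 1 - (hX.1.eigenvalues i : ℂ))
        = 1 - Matrix.diagonal (RCLike.ofReal ∘ hX.1.eigenvalues) by
      rw [← Matrix.diagonal_one, Matrix.diagonal_sub]; rfl]
    rw [Matrix.mul_sub, Matrix.mul_one, Matrix.sub_mul, hV2]
  rw [he]
  refine Matrix.PosSemidef.mul_mul_conjTranspose_same ?_ V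
  refine Matrix.posSemidef_diagonal_iff.mpr (fun i => ?_)
  rw [show (1 : ℂ) - (hX.1.eigenvalues i : ℂ) = ((1 - hX.1.eigenvalues i : ℝ) : ℂ) by push_cast; ring]
  rw [Complex.zero_le_real]
  linarith [hev i]

lemma st13_partial_le_total {N : ℕ} {f : Fin N → ℝ} (hf : ∀ i, 0 ≤ f i) (K : ℕ) :
    ∑ k ∈ Finset.range K, st13ext f k ≤ ∑ k ∈ Finset.range N, st13ext f k := by
  rcases le_or_gt K N with h | h
  · refine Finset.sum_le_sum_of_subset_of_nonneg (Finset.range_subset_range.2 h) (fun k _ _ => ?_)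
    by_cases hk : k < N
    · simp only [st13ext, dif_pos hk]; exact hf _
    · simp [st13ext, dif_neg hk]
  · rw [Finset.sum_subset (Finset.range_subset_range.2 h.le)
      (fun k _ hk => st13ext_zero f (by simpa using hk))]

lemma st13_eigsDesc_nonneg {N : ℕ} {W : Matrix (Fin N) (Fin N) ℂ} (hW : W.PosSemidef)
    (i : Fin N) : 0 ≤ eigsDesc W i := by
  rw [st13_eigsDesc_apply hW.1]
  exact hW.eigenvalues_nonneg _

lemma st13_sumTopEigs_eq {N : ℕ} (W : Matrix (Fin N) (Fin N) ℂ) (K : ℕ) :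
    sumTopEigs K W = ∑ k ∈ Finset.range K, st13ext (eigsDesc W) k :=
  (st13_range_sum (eigsDesc W) K).symm

end ST13Lemmas

/-- Let τ be a quantum channel with A(τ) = ∑ᵢ Aᵢ Aᵢ* and λ₁(A(τ)) < 1.
Let m' ≥ 2 be the smallest positive integer with λ₁(A(τ)) + ⋯ + λ_{m'}(A(τ)) ≥ 1 and set
η = 1 - ∑_{i=1}^{m'-1} λᵢ(A(τ)). Then
H(τ) ≥ F(A(τ)) := -η log η - ∑_{i=1}^{m'-1} λᵢ(A(τ)) log λᵢ(A(τ)), and moreover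
F(A(τ)) ≥ -log λ₁(A(τ)). -/
theorem stmt_13 {n m l : ℕ} (A : Fin l → Matrix (Fin m) (Fin n) ℂ)
    (hA : ∑ i, (A i)ᴴ * A i = 1)
    (Aτ : Matrix (Fin m) (Fin m) ℂ) (hAτ : Aτ = ∑ i, A i * (A i)ᴴ)
    (hlam : lambdaMax Aτ < 1)
    (m' : ℕ) (hm'2 : 2 ≤ m')
    (hm'ge : 1 ≤ sumTopEigs m' Aτ)
    (hm'min : ∀ j : ℕ, 0 < j → j < m' → sumTopEigs j Aτ < 1)
    (η : ℝ) (hη : η = 1 - sumTopEigs (m' - 1) Aτ)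
    (F : ℝ) (hF : F = -(η * Real.log η) -
      ∑ i : Fin m, if (i : ℕ) < m' - 1 then
        eigsDesc Aτ i * Real.log (eigsDesc Aτ i) else 0) :
    F ≤ minEntropy (fun X : Matrix (Fin n) (Fin n) ℂ => ∑ i, A i * X * (A i)ᴴ) ∧
      -Real.log (lambdaMax Aτ) ≤ F := by
  classical
  have hAτpsd : Aτ.PosSemidef := by
    rw [hAτ]
    exact st13_psd_finsum _ (fun i => Matrix.posSemidef_self_mul_conjTranspose (A i))
  have hAh : Aτ.IsHermitian := hAτpsd.1
  have hd0 : ∀ i, 0 ≤ eigsDesc Aτ i := fun i => st13_eigsDesc_nonneg hAτpsd i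
  have hm1 : 1 ≤ m := by
    by_contra h
    push_neg at h
    interval_cases m
    rw [sumTopEigs] at hm'ge
    simp at hm'ge
    linarith
  have htrAτ : Aτ.trace = (n : ℂ) := by
    rw [hAτ, Matrix.trace_sum]
    rw [Finset.sum_congr rfl (fun i _ => Matrix.trace_mul_comm (A i) ((A i)ᴴ))]
    rw [← Matrix.trace_sum, hA, Matrix.trace_one]
    simp
  have hsumd : ∑ i, eigsDesc Aτ i = (n : ℝ) := by
    have h1 := st13_trace_eq hAh
    rw [htrAτ] at h1
    have h2 : ∑ i, eigsDesc Aτ i = ∑ i, hAh.eigenvalues i :=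
      st13_sum_eigsDesc_comp hAh (fun x => x)
    rw [h2]
    exact_mod_cast h1.symm
  have hsumTopm : sumTopEigs m Aτ = (n : ℝ) := by
    rw [sumTopEigs, Finset.sum_congr rfl (fun i _ => if_pos i.is_lt)]
    exact hsumd
  have hext0 : ∀ k, 0 ≤ st13ext (eigsDesc Aτ) k := by
    intro k
    by_cases h : k < m
    · simp only [st13ext, dif_pos h]
      exact hd0 _
    · simp [st13ext, dif_neg h]
  have hn1 : (1 : ℝ) ≤ n := by
    calc (1 : ℝ) ≤ sumTopEigs m' Aτ := hm'ge
      _ = ∑ k ∈ Finset.range m', st13ext (eigsDesc Aτ) k := st13_sumTopEigs_eq _ _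
      _ ≤ ∑ k ∈ Finset.range m, st13ext (eigsDesc Aτ) k := st13_partial_le_total hd0 m'
      _ = sumTopEigs m Aτ := (st13_sumTopEigs_eq _ _).symm
      _ = (n : ℝ) := hsumTopm
  have hnn : 1 ≤ n := by exact_mod_cast hn1
  have hm'm : m' ≤ m := by
    by_contra h
    push_neg at h
    have := hm'min m (by omega) h
    rw [hsumTopm] at this
    linarith
  have hm'1m : m' - 1 < m := by omega
  have hη0 : 0 < η := by
    have := hm'min (m' - 1) (by omega) (by omega)
    rw [hη]
    linarith
  set ν : ℕ → ℝ := fun k => if k < m' - 1 then st13ext (eigsDesc Aτ) k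
    else if k = m' - 1 then η else 0 with hν
  have hν0 : ∀ k, 0 ≤ ν k := by
    intro k
    simp only [hν]
    rcases lt_trichotomy k (m' - 1) with h | h | h
    · rw [if_pos h]; exact hext0 k
    · rw [if_neg (by omega), if_pos h]; exact hη0.le
    · rw [if_neg (by omega), if_neg (by omega)]
  have hνz : ∀ k, m ≤ k → ν k = 0 := by
    intro k hk
    simp only [hν]
    rw [if_neg (by omega), if_neg (by omega)]
  have hνK : ∀ K, K ≤ m' - 1 → ∑ k ∈ Finset.range K, ν k = sumTopEigs K Aτ := by
    intro K hK
    rw [st13_sumTopEigs_eq]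
    refine Finset.sum_congr rfl fun k hk => ?_
    simp only [hν]
    rw [if_pos (by simp only [Finset.mem_range] at hk; omega)]
  have hνm' : ∀ K, m' ≤ K → ∑ k ∈ Finset.range K, ν k = 1 := by
    intro K hK
    have h1 : ∑ k ∈ Finset.range K, ν k = ∑ k ∈ Finset.range m', ν k := by
      refine (Finset.sum_subset (Finset.range_subset_range.2 hK) (fun k _ hk => ?_)).symm
      simp only [Finset.mem_range] at hk
      simp only [hν]
      rw [if_neg (by omega), if_neg (by omega)]
    have h2 : m' = (m' - 1) + 1 := by omega
    rw [h1, h2, Finset.sum_range_succ, hνK (m' - 1) le_rfl]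
    have h3 : ν (m' - 1) = η := by
      simp only [hν]
      rw [if_neg (by omega)]
      simp
    rw [h3, hη]
    ring
  have hνsm : ∑ k ∈ Finset.range m, ν k = 1 := hνm' m hm'm
  have hFν : F = -∑ k ∈ Finset.range m, ν k * Real.log (ν k) := by
    set f : Fin m → ℝ := fun i => eigsDesc Aτ i * Real.log (eigsDesc Aτ i) with hf'
    have h1 : ∑ k ∈ Finset.range m, ν k * Real.log (ν k)
        = ∑ k ∈ Finset.range m, ((if k < m' - 1 then st13ext f k else 0)
            + (if k = m' - 1 then η * Real.log η else 0)) := by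
      refine Finset.sum_congr rfl fun k hk => ?_
      simp only [Finset.mem_range] at hk
      rcases lt_trichotomy k (m' - 1) with h | h | h
      · simp only [hν]
        rw [if_pos h, if_pos h, if_neg (by omega), add_zero, hf']
        simp only [st13ext, dif_pos hk]
      · simp only [hν]
        rw [if_neg (by omega), if_pos h, if_neg (by omega), if_pos h, zero_add]
      · simp only [hν]
        rw [if_neg (by omega), if_neg (by omega), if_neg (by omega), if_neg (by omega)]
        simp
    have h2 : ∑ k ∈ Finset.range m, (if k = m' - 1 then η * Real.log η else 0)
        = η * Real.log η := by
      rw [Finset.sum_ite_eq' (Finset.range m) (m' - 1) (fun _ => η * Real.log η)]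
      rw [if_pos (Finset.mem_range.2 hm'1m)]
    have h3 : ∑ k ∈ Finset.range m, (if k < m' - 1 then st13ext f k else 0)
        = ∑ k ∈ Finset.range (m' - 1), st13ext f k := by
      refine (Finset.sum_subset (Finset.range_subset_range.2 (by omega)) (fun k hk hk' => ?_)).symm.trans
        (Finset.sum_congr rfl (fun k hk => if_pos (Finset.mem_range.1 hk)))
      simp only [Finset.mem_range] at hk hk'
      rw [if_neg (by omega)]
    have h4 := st13_range_sum f (m' - 1)
    rw [hF, h1, Finset.sum_add_distrib, h2, h3, h4]
    ring
  -- part 2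
  have hd00 : (0 : ℝ) ≤ eigsDesc Aτ ⟨0, by omega⟩ := hd0 _
  have hextle : ∀ k, st13ext (eigsDesc Aτ) k ≤ eigsDesc Aτ ⟨0, by omega⟩ := by
    intro k
    by_cases h : k < m
    · simp only [st13ext, dif_pos h]
      exact st13_eigsDesc_antitone hAh (by simp [Fin.le_def])
    · simpa [st13ext, dif_neg h] using hd00
  have hne : Nonempty (Fin m) := ⟨⟨0, by omega⟩⟩
  have hlamd : lambdaMax Aτ = eigsDesc Aτ ⟨0, by omega⟩ := by
    rw [lambdaMax, dif_pos hAh]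
    apply le_antisymm
    · apply ciSup_le
      intro i
      have he : hAh.eigenvalues i
          = eigsDesc Aτ ((Fin.revPerm.trans (Tuple.sort hAh.eigenvalues)).symm i) := by
        rw [st13_eigsDesc_apply hAh, Equiv.apply_symm_apply]
      rw [he]
      exact st13_eigsDesc_antitone hAh (by simp [Fin.le_def])
    · have he : eigsDesc Aτ ⟨0, by omega⟩
          = hAh.eigenvalues ((Fin.revPerm.trans (Tuple.sort hAh.eigenvalues)) ⟨0, by omega⟩) :=
        st13_eigsDesc_apply hAh _
      rw [he]
      exact le_ciSup (Finite.bddAbove_range _) _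
  have hd0pos : 0 < eigsDesc Aτ ⟨0, by omega⟩ := by
    by_contra h
    push_neg at h
    have h1 : sumTopEigs m' Aτ ≤ 0 := by
      rw [st13_sumTopEigs_eq]
      exact Finset.sum_nonpos fun k _ => (hextle k).trans h
    linarith
  have hηd : η ≤ st13ext (eigsDesc Aτ) (m' - 1) := by
    have h1 : sumTopEigs m' Aτ = sumTopEigs (m' - 1) Aτ + st13ext (eigsDesc Aτ) (m' - 1) := by
      rw [st13_sumTopEigs_eq, st13_sumTopEigs_eq, show m' = (m' - 1) + 1 by omega,
        Finset.sum_range_succ]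
      simp
    rw [hη]
    linarith [hm'ge]
  have hνled0 : ∀ k, ν k ≤ eigsDesc Aτ ⟨0, by omega⟩ := by
    intro k
    simp only [hν]
    rcases lt_trichotomy k (m' - 1) with h | h | h
    · rw [if_pos h]; exact hextle k
    · rw [if_neg (by omega), if_pos h]; exact hηd.trans (hextle _)
    · rw [if_neg (by omega), if_neg (by omega)]; exact hd0pos.le
  have hpart2 : -Real.log (lambdaMax Aτ) ≤ F := by
    rw [hlamd, hFν, neg_le_neg_iff]
    calc ∑ k ∈ Finset.range m, ν k * Real.log (ν k)
        ≤ ∑ k ∈ Finset.range m, ν k * Real.log (eigsDesc Aτ ⟨0, by omega⟩) := by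
          refine Finset.sum_le_sum fun k _ => ?_
          rcases eq_or_lt_of_le (hν0 k) with h | h
          · rw [← h]
            simp
          · exact mul_le_mul_of_nonneg_left (Real.log_le_log h (hνled0 k)) (hν0 k)
      _ = Real.log (eigsDesc Aτ ⟨0, by omega⟩) := by
          rw [← Finset.sum_mul, hνsm, one_mul]
  refine ⟨?_, hpart2⟩
  -- part 1
  apply le_csInf
  · refine ⟨entropy (∑ i, A i * (Matrix.diagonal (fun _ : Fin n => (((n : ℝ)⁻¹ : ℝ) : ℂ))) * (A i)ᴴ),
      Matrix.diagonal (fun _ : Fin n => (((n : ℝ)⁻¹ : ℝ) : ℂ)), ?_, ?_, rfl⟩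
    · exact Matrix.posSemidef_diagonal_iff.mpr fun i =>
        Complex.zero_le_real.2 (by positivity)
    · rw [Matrix.trace_diagonal]
      rw [Finset.sum_const, Finset.card_univ, Fintype.card_fin, nsmul_eq_mul]
      push_cast
      rw [mul_inv_cancel₀ (show (n:ℂ) ≠ 0 from Nat.cast_ne_zero.mpr (by omega))]
  rintro b ⟨X, hX, hXtr, rfl⟩
  show F ≤ entropy (∑ i, A i * X * (A i)ᴴ)
  set Y := ∑ i, A i * X * (A i)ᴴ with hY
  have hYpsd : Y.PosSemidef := st13_psd_finsum _ (fun i => hX.mul_mul_conjTranspose_same (A i))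
  have hYtr : Y.trace = 1 := by
    rw [hY, Matrix.trace_sum]
    rw [Finset.sum_congr rfl (fun i _ => Matrix.trace_mul_cycle (A i) X ((A i)ᴴ))]
    rw [← Matrix.trace_sum, ← Finset.sum_mul, hA, Matrix.one_mul, hXtr]
  set Z := ∑ i, A i * (1 - X) * (A i)ᴴ with hZ
  have hZpsd : Z.PosSemidef :=
    st13_psd_finsum _ (fun i => (st13_one_sub_psd hX hXtr).mul_mul_conjTranspose_same (A i))
  have hYZ : Aτ = Y + Z := by
    rw [hAτ, hY, hZ, ← Finset.sum_add_distrib]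
    refine Finset.sum_congr rfl fun i _ => ?_
    rw [Matrix.mul_sub, Matrix.mul_one, Matrix.sub_mul]
    abel
  set μ : ℕ → ℝ := st13ext (eigsDesc Y) with hμ
  have hYd0 : ∀ i, 0 ≤ eigsDesc Y i := fun i => st13_eigsDesc_nonneg hYpsd i
  have hμ0 : ∀ k, 0 ≤ μ k := by
    intro k
    simp only [hμ]
    by_cases h : k < m
    · simp only [st13ext, dif_pos h]
      exact hYd0 _
    · simp [st13ext, dif_neg h]
  have hμz : ∀ k, m ≤ k → μ k = 0 := fun k hk => st13ext_zero _ hk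
  have hμa : ∀ ⦃j k : ℕ⦄, j ≤ k → μ k ≤ μ j := by
    intro j k hjk
    by_cases hk : k < m
    · have hj : j < m := by omega
      simp only [hμ, st13ext, dif_pos hk, dif_pos hj]
      exact st13_eigsDesc_antitone hYpsd.1 (by simp only [Fin.mk_le_mk]; omega)
    · rw [hμ, st13ext_zero _ (by omega)]
      exact hμ0 j
  have hμs : ∑ k ∈ Finset.range m, μ k = 1 := by
    rw [hμ, st13_range_sum]
    rw [Finset.sum_congr rfl (fun i _ => if_pos i.is_lt)]
    rw [st13_sum_eigsDesc_comp hYpsd.1 (fun x => x)]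
    exact st13_sum_eigenvalues_eq_one hYpsd hYtr
  have hle : ∀ K, ∑ k ∈ Finset.range K, μ k ≤ ∑ k ∈ Finset.range K, ν k := by
    intro K
    rcases le_or_gt K (m' - 1) with hK | hK
    · rw [hνK K hK, hμ, ← st13_sumTopEigs_eq]
      rw [sumTopEigs, sumTopEigs]
      have := st13_sumTop_mono hYpsd hZpsd (hYZ ▸ hAh) (show K ≤ m by omega)
      rwa [← hYZ] at this
    · have h1 : ∑ k ∈ Finset.range K, μ k ≤ 1 := by
        calc ∑ k ∈ Finset.range K, μ k ≤ ∑ k ∈ Finset.range m, μ k :=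
            st13_partial_le_total hYd0 K
          _ = 1 := hμs
      rw [hνm' K (by omega)]
      exact h1
  have hμν := st13_schur m μ ν hμ0 hμa hμz hμs hν0 hνz hνsm hle
  have hent : entropy Y = -∑ k ∈ Finset.range m, μ k * Real.log (μ k) := by
    rw [entropy, dif_pos hYpsd.1]
    congr 1
    have h1 : ∑ k ∈ Finset.range m, μ k * Real.log (μ k)
        = ∑ k ∈ Finset.range m, st13ext (fun i => eigsDesc Y i * Real.log (eigsDesc Y i)) k := by
      refine Finset.sum_congr rfl fun k hk => ?_
      have hk' := Finset.mem_range.1 hk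
      simp only [hμ, st13ext, dif_pos hk']
    rw [h1, st13_range_sum]
    rw [Finset.sum_congr rfl (fun i _ => if_pos i.is_lt)]
    exact (st13_sum_eigsDesc_comp hYpsd.1 (fun x => x * Real.log x)).symm
  rw [hent, hFν]
  linarith [hμν]
end
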